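/- arXiv:1812.10677 — 5 statements merged into one kernel-verified Lean document; each statement's English description precedes it below -/
import Mathlib

section
/- Let $1 < N < p$ and let $\varphi : [1,\infty) \to \mathbb{R}$ be a $C^1$ function with compact support. Then for every $r \geq 1$, $|\varphi(r)|^p \leq 2^{p-1} \left( |\varphi(1)|^p + \left(\frac{p-1}{p-N}\right)^{p-1} r^{p-N} \int_1^r t^{N-1} |\varphi'(t)|^p \, dt \right)$. -/
open MeasureTheory Set

lemma real_two_rpow_aux (a b : ℝ) (ha : 0 ≤ a) (hb : 0 ≤ b) {p : ℝ} (hp : 1 ≤ p) :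
    (a + b) ^ p ≤ 2 ^ (p - 1) * (a ^ p + b ^ p) := by
  have h := NNReal.rpow_add_le_mul_rpow_add_rpow ⟨a, ha⟩ ⟨b, hb⟩ hp
  have h2 := NNReal.coe_le_coe.2 h
  push_cast [NNReal.coe_rpow] at h2
  convert h2 using 2
  all_goals rfl

theorem radial_estimate_supercritical (p N : ℝ) (hN : 1 < N) (hNp : N < p)
    (φ : ℝ → ℝ) (hφ : ContDiff ℝ 1 φ) (hsupp : HasCompactSupport φ)
    (r : ℝ) (hr : 1 ≤ r) :
    |φ r| ^ p ≤ 2 ^ (p - 1) *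
      (|φ 1| ^ p + ((p - 1) / (p - N)) ^ (p - 1) * r ^ (p - N) *
        ∫ t in Ioc 1 r, t ^ (N - 1) * |deriv φ t| ^ p) := by
  have hp1 : 1 < p := hN.trans hNp
  have hp0 : 0 < p := by linarith
  have hpN : 0 < p - N := by linarith
  have hq0 : 0 < p - 1 := by linarith
  have hr0 : (0:ℝ) < r := by linarith
  have hd : Continuous (deriv φ) := hφ.continuous_deriv le_rfl
  set μ := volume.restrict (Ioc (1:ℝ) r) with hμ
  haveI : IsFiniteMeasure μ := by
    constructor
    rw [hμ, Measure.restrict_apply_univ, Real.volume_Ioc]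
    exact ENNReal.ofReal_lt_top
  have hftc : φ r - φ 1 = ∫ t in Ioc (1:ℝ) r, deriv φ t := by
    rw [← intervalIntegral.integral_of_le hr]
    exact (intervalIntegral.integral_deriv_eq_sub
      (fun x _ => (hφ.differentiable one_ne_zero).differentiableAt)
      (hd.intervalIntegrable 1 r)).symm
  set I := ∫ t in Ioc (1:ℝ) r, |deriv φ t| with hI
  have hI0 : 0 ≤ I := integral_nonneg fun t => abs_nonneg _
  set B := ∫ t in Ioc (1:ℝ) r, t ^ (N - 1) * |deriv φ t| ^ p with hB
  have hB0 : 0 ≤ B := by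
    refine setIntegral_nonneg measurableSet_Ioc fun t ht => ?_
    have ht1 : (0:ℝ) < t := lt_of_lt_of_le one_pos ht.1.le
    positivity
  have hstep1 : |φ r| ≤ |φ 1| + I := by
    have h2 : |φ r - φ 1| ≤ I := by
      rw [hftc, hI]
      simpa [Real.norm_eq_abs] using
        norm_integral_le_integral_norm (μ := μ) (f := deriv φ)
    calc |φ r| = |φ 1 + (φ r - φ 1)| := by ring_nf
    _ ≤ |φ 1| + |φ r - φ 1| := abs_add_le _ _
    _ ≤ |φ 1| + I := by linarith
  -- Hölder
  set q := p / (p - 1) with hq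
  have hqq : 0 < q := by positivity
  have hconj : q.HolderConjugate p := (Real.HolderConjugate.conjExponent hp1).symm
  set f : ℝ → ℝ := fun t => t ^ ((1 - N)/p) with hf
  set g : ℝ → ℝ := fun t => t ^ ((N - 1)/p) * |deriv φ t| with hg
  obtain ⟨M, hM⟩ := hd.bounded_above_of_compact_support hsupp.deriv
  have hfmeas : Measurable f := by measurability
  have hgmeas : Measurable g := by
    apply Measurable.mul ?_ hd.measurable.abs
    measurability
  have hmemf : MemLp f (ENNReal.ofReal q) μ := by
    refine MemLp.of_bound hfmeas.aestronglyMeasurable 1 ?_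
    rw [hμ, ae_restrict_iff' measurableSet_Ioc]
    filter_upwards with t ht
    rw [Real.norm_eq_abs, abs_of_nonneg (Real.rpow_nonneg (by linarith [ht.1]) _)]
    exact Real.rpow_le_one_of_one_le_of_nonpos ht.1.le
      (div_nonpos_of_nonpos_of_nonneg (by linarith) hp0.le)
  have hmemg : MemLp g (ENNReal.ofReal p) μ := by
    refine MemLp.of_bound hgmeas.aestronglyMeasurable (r ^ ((N-1)/p) * M) ?_
    rw [hμ, ae_restrict_iff' measurableSet_Ioc]
    filter_upwards with t ht
    have ht0 : (0:ℝ) ≤ t := by linarith [ht.1]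
    rw [Real.norm_eq_abs, abs_of_nonneg (mul_nonneg (Real.rpow_nonneg ht0 _) (abs_nonneg _))]
    have hMt : |deriv φ t| ≤ M := by simpa [Real.norm_eq_abs] using hM t
    refine mul_le_mul ?_ hMt (abs_nonneg _) (Real.rpow_nonneg hr0.le _)
    exact Real.rpow_le_rpow ht0 ht.2 (div_nonneg (by linarith) hp0.le)
  have hfnn : 0 ≤ᵐ[μ] f := by
    rw [hμ, Filter.EventuallyLE, ae_restrict_iff' measurableSet_Ioc]
    filter_upwards with t ht
    exact Real.rpow_nonneg (by linarith [ht.1]) _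
  have hgnn : 0 ≤ᵐ[μ] g := by
    rw [hμ, Filter.EventuallyLE, ae_restrict_iff' measurableSet_Ioc]
    filter_upwards with t ht
    exact mul_nonneg (Real.rpow_nonneg (by linarith [ht.1]) _) (abs_nonneg _)
  have hfg : ∫ t, f t * g t ∂μ = I := by
    rw [hI, hμ]
    refine setIntegral_congr_fun measurableSet_Ioc fun t ht => ?_
    have ht0 : (0:ℝ) < t := lt_of_lt_of_le one_pos ht.1.le
    simp only [hf, hg]
    rw [← mul_assoc, ← Real.rpow_add ht0]
    have : (1 - N)/p + (N - 1)/p = 0 := by ring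
    rw [this, Real.rpow_zero, one_mul]
  have hgp : ∫ t, g t ^ p ∂μ = B := by
    rw [hB, hμ]
    refine setIntegral_congr_fun measurableSet_Ioc fun t ht => ?_
    have ht0 : (0:ℝ) ≤ t := by linarith [ht.1]
    simp only [hg]
    rw [Real.mul_rpow (Real.rpow_nonneg ht0 _) (abs_nonneg _),
      ← Real.rpow_mul ht0, div_mul_cancel₀ _ hp0.ne']
  set y := (1 - N)/(p - 1) with hy
  have hfq : ∫ t, f t ^ q ∂μ = ∫ t in Ioc (1:ℝ) r, t ^ y := by
    rw [hμ]
    refine setIntegral_congr_fun measurableSet_Ioc fun t ht => ?_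
    have ht0 : (0:ℝ) ≤ t := by linarith [ht.1]
    simp only [hf]
    rw [← Real.rpow_mul ht0]
    congr 1
    rw [hq, hy]
    field_simp
  have hy1 : -1 < y := by
    rw [hy, lt_div_iff₀ hq0]
    linarith
  set e := (p - N)/(p - 1) with he
  have hye : y + 1 = e := by rw [hy, he]; field_simp; ring
  have hA : ∫ t in Ioc (1:ℝ) r, t ^ y ≤ (p - 1)/(p - N) * r ^ e := by
    rw [← intervalIntegral.integral_of_le hr, integral_rpow (Or.inl hy1), hye,
      Real.one_rpow]
    have he0 : 0 < e := by rw [he]; positivity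
    rw [div_le_iff₀ he0]
    have hkey : (p - 1)/(p - N) * r ^ e * e = r ^ e := by
      rw [he]; field_simp
    rw [hkey]
    linarith
  have hAnn : 0 ≤ ∫ t in Ioc (1:ℝ) r, t ^ y := by
    refine setIntegral_nonneg measurableSet_Ioc fun t ht => ?_
    exact Real.rpow_nonneg (by linarith [ht.1]) _
  have hholder := integral_mul_le_Lp_mul_Lq_of_nonneg hconj hfnn hgnn hmemf hmemg
  rw [hfg, hgp] at hholder
  have hIle : I ≤ ((p - 1)/(p - N) * r ^ e) ^ (1/q) * B ^ (1/p) := by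
    refine hholder.trans ?_
    refine mul_le_mul_of_nonneg_right ?_ (Real.rpow_nonneg hB0 _)
    rw [hfq]
    exact Real.rpow_le_rpow hAnn hA (by positivity)
  have hC0 : (0:ℝ) ≤ (p - 1)/(p - N) := by positivity
  have hIp : I ^ p ≤ ((p - 1)/(p - N)) ^ (p - 1) * r ^ (p - N) * B := by
    calc I ^ p ≤ (((p - 1)/(p - N) * r ^ e) ^ (1/q) * B ^ (1/p)) ^ p :=
          Real.rpow_le_rpow hI0 hIle hp0.le
    _ = ((p - 1)/(p - N)) ^ (p - 1) * r ^ (p - N) * B := by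
        have hren : (0:ℝ) ≤ r ^ e := Real.rpow_nonneg hr0.le _
        rw [Real.mul_rpow (Real.rpow_nonneg (mul_nonneg hC0 hren) _)
          (Real.rpow_nonneg hB0 _), ← Real.rpow_mul (mul_nonneg hC0 hren),
          ← Real.rpow_mul hB0, one_div_mul_cancel hp0.ne', Real.rpow_one]
        have hs : 1/q * p = p - 1 := by rw [hq]; field_simp
        rw [hs, Real.mul_rpow hC0 hren, ← Real.rpow_mul hr0.le]
        have : e * (p - 1) = p - N := by rw [he]; field_simp
        rw [this]
  calc |φ r| ^ p ≤ (|φ 1| + I) ^ p :=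
        Real.rpow_le_rpow (abs_nonneg _) hstep1 hp0.le
  _ ≤ 2 ^ (p - 1) * (|φ 1| ^ p + I ^ p) :=
        real_two_rpow_aux _ _ (abs_nonneg _) hI0 hp1.le
  _ ≤ _ := by
        refine mul_le_mul_of_nonneg_left (add_le_add_right ?_ _) (by positivity)
        exact hIp
end

section
/- (Muckenhoupt condition / weighted Hardy inequality) Let $1 < p < \infty$ with conjugate exponent $p'$, and let $u, v$ be nonnegative measurable functions on $(0,\infty)$ with $v > 0$ a.e. Suppose $A := \sup_{t>0} \left( \int_0^t u(s)\,ds \right)^{1/p} \left( \int_t^\infty v(s)^{1-p'}\,ds \right)^{1/p'} < \infty$. Then for every measurable function $f$ on $(0,\infty)$, $\left( \int_0^\infty \left| \int_s^\infty f(t)\,dt \right|^p u(s)\,ds \right)^{1/p} \leq p^{1/p} (p')^{1/p'} A \left( \int_0^\infty |f(s)|^p v(s)\,ds \right)^{1/p}$. -/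
open MeasureTheory Set Filter
open scoped ENNReal

section Aux

lemma Kcalc {r : ℝ} (hr0 : 0 < r) {a : ℝ≥0∞} (ha : a ≠ 0) :
    a ^ (-r) = ENNReal.ofReal r *
      ∫⁻ l in Ioi (0:ℝ), ENNReal.ofReal (l ^ (-r-1)) *
        (if a < ENNReal.ofReal l then 1 else 0) := by
  rcases eq_or_ne a ⊤ with rfl | hatop
  · simp [ENNReal.top_rpow_of_neg (neg_neg_iff_pos.mpr hr0)]
  · set a' := a.toReal with ha'
    have ha'pos : 0 < a' := ENNReal.toReal_pos ha hatop
    have hset : ∀ l : ℝ, a < ENNReal.ofReal l ↔ l ∈ Ioi a' := by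
      intro l
      simp [mem_Ioi, ENNReal.lt_ofReal_iff_toReal_lt hatop, ha']
    have h1 : (∫⁻ l in Ioi (0:ℝ), ENNReal.ofReal (l ^ (-r-1)) *
        (if a < ENNReal.ofReal l then 1 else 0)) =
        ∫⁻ l in Ioi a', ENNReal.ofReal (l ^ (-r-1)) := by
      have hpt : ∀ l : ℝ, ENNReal.ofReal (l ^ (-r-1)) *
          (if a < ENNReal.ofReal l then 1 else 0) =
          (Ioi a').indicator (fun l => ENNReal.ofReal (l ^ (-r-1))) l := by
        intro l
        by_cases h : a < ENNReal.ofReal l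
        · rw [indicator_of_mem ((hset l).mp h)]; simp [h]
        · rw [indicator_of_notMem (fun hm => h ((hset l).mpr hm))]; simp [h]
      simp_rw [hpt]
      rw [setLIntegral_indicator measurableSet_Ioi]
      congr 1
      rw [inter_eq_left.mpr (Ioi_subset_Ioi ha'pos.le)]
    rw [h1]
    have hint : ∫⁻ l in Ioi a', ENNReal.ofReal (l ^ (-r-1)) =
        ENNReal.ofReal (a' ^ (-r) / r) := by
      rw [← ofReal_integral_eq_lintegral_ofReal
        (integrableOn_Ioi_rpow_of_lt (by linarith) ha'pos)]
      · rw [integral_Ioi_rpow_of_lt (by linarith) ha'pos]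
        congr 1
        rw [show -r - 1 + 1 = -r by ring]
        field_simp
      · filter_upwards [ae_restrict_mem measurableSet_Ioi] with l hl
        exact Real.rpow_nonneg (le_of_lt (lt_trans ha'pos hl)) _
    rw [hint, ← ENNReal.ofReal_mul hr0.le]
    have : r * (a' ^ (-r) / r) = a' ^ (-r) := by field_simp
    rw [this, ← ENNReal.ofReal_rpow_of_pos ha'pos, ENNReal.ofReal_toReal hatop]

lemma key_layer {α : Type*} [MeasurableSpace α] {r : ℝ} (hr0 : 0 < r) (hr1 : r < 1)
    (μ : Measure α) [SFinite μ]
    {h L : α → ℝ≥0∞} (hh : Measurable h) (hL : Measurable L)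
    (hL0 : ∀ᵐ x ∂μ, L x = 0 → h x = 0)
    {M : ℝ≥0∞} (hM : M ≠ ⊤)
    (hlev : ∀ lam : ℝ≥0∞, ∫⁻ x in {y | L y < lam}, h x ∂μ ≤ min lam M) :
    ∫⁻ x, h x * (L x) ^ (-r) ∂μ ≤ ENNReal.ofReal (1/(1-r)) * M ^ (1-r) := by
  have hrpow : Measurable fun l : ℝ => ENNReal.ofReal (l ^ (-r-1)) := by
    have := Real.continuousAt_rpow_const
    fun_prop
  have hmeas_ite : ∀ x, Measurable fun l : ℝ =>
      ENNReal.ofReal (l ^ (-r-1)) * (if L x < ENNReal.ofReal l then 1 else 0) := by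
    intro x
    exact hrpow.mul (Measurable.ite
      (ENNReal.measurable_ofReal measurableSet_Ioi) measurable_const measurable_const)
  have step1 : ∫⁻ x, h x * (L x) ^ (-r) ∂μ ≤
      ENNReal.ofReal r * ∫⁻ x, (∫⁻ l in Ioi (0:ℝ),
        h x * (ENNReal.ofReal (l ^ (-r-1)) *
          (if L x < ENNReal.ofReal l then 1 else 0))) ∂μ := by
    rw [← lintegral_const_mul' _ _ ENNReal.ofReal_ne_top]
    apply lintegral_mono_ae
    filter_upwards [hL0] with x hx
    rcases eq_or_ne (L x) 0 with hx0 | hx0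
    · rw [hx hx0, zero_mul]
      exact zero_le
    apply le_of_eq
    rw [Kcalc hr0 hx0]
    rw [← mul_assoc, mul_comm (h x) (ENNReal.ofReal r), mul_assoc]
    congr 1
    rw [← lintegral_const_mul (h x) (hmeas_ite x)]
  refine le_trans step1 ?_
  have hS : MeasurableSet {q : α × ℝ | L q.1 < ENNReal.ofReal q.2} :=
    measurableSet_lt (hL.comp measurable_fst)
      (ENNReal.measurable_ofReal.comp measurable_snd)
  have swap : (∫⁻ x, (∫⁻ l in Ioi (0:ℝ),
        h x * (ENNReal.ofReal (l ^ (-r-1)) *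
          (if L x < ENNReal.ofReal l then 1 else 0))) ∂μ) =
      ∫⁻ l in Ioi (0:ℝ), (∫⁻ x,
        h x * (ENNReal.ofReal (l ^ (-r-1)) *
          (if L x < ENNReal.ofReal l then 1 else 0)) ∂μ) := by
    apply lintegral_lintegral_swap
    apply Measurable.aemeasurable
    apply (hh.comp measurable_fst).mul
    apply ((hrpow.comp measurable_snd)).mul
    exact Measurable.ite hS measurable_const measurable_const
  rw [swap]
  have inner_bound : ∀ l : ℝ, (∫⁻ x,
      h x * (ENNReal.ofReal (l ^ (-r-1)) *
        (if L x < ENNReal.ofReal l then 1 else 0)) ∂μ) ≤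
      ENNReal.ofReal (l ^ (-r-1)) * min (ENNReal.ofReal l) M := by
    intro l
    have hpt : ∀ x, h x * (ENNReal.ofReal (l ^ (-r-1)) *
        (if L x < ENNReal.ofReal l then 1 else 0)) =
        ENNReal.ofReal (l ^ (-r-1)) *
          ({y | L y < ENNReal.ofReal l}.indicator h x) := by
      intro x
      simp only [Set.indicator_apply, mem_setOf_eq]
      by_cases hx : L x < ENNReal.ofReal l
      · simp only [if_pos hx, mul_one]; ring
      · simp [if_neg hx]
    have hmS : MeasurableSet {y | L y < ENNReal.ofReal l} := hL measurableSet_Iio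
    simp_rw [hpt]
    rw [lintegral_const_mul _ (hh.indicator hmS)]
    apply mul_le_mul_right
    rw [lintegral_indicator hmS]
    exact hlev _
  calc ENNReal.ofReal r * ∫⁻ l in Ioi (0:ℝ), (∫⁻ x,
        h x * (ENNReal.ofReal (l ^ (-r-1)) *
          (if L x < ENNReal.ofReal l then 1 else 0)) ∂μ)
      ≤ ENNReal.ofReal r * ∫⁻ l in Ioi (0:ℝ),
          ENNReal.ofReal (l ^ (-r-1)) * min (ENNReal.ofReal l) M := by
        exact mul_le_mul_right (lintegral_mono inner_bound) _
    _ ≤ ENNReal.ofReal (1/(1-r)) * M ^ (1-r) := by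
        rcases eq_or_ne M 0 with rfl | hM0
        · simp
        have hm : 0 < M.toReal := ENNReal.toReal_pos hM0 hM
        set m := M.toReal with hmdef
        have hMm : M = ENNReal.ofReal m := (ENNReal.ofReal_toReal hM).symm
        have hsplit : Ioi (0:ℝ) = Ioc 0 m ∪ Ioi m := (Ioc_union_Ioi_eq_Ioi hm.le).symm
        have hdisj : Disjoint (Ioc (0:ℝ) m) (Ioi m) := by
          simp [Set.disjoint_left]
        rw [hsplit, lintegral_union measurableSet_Ioi hdisj]
        have t1 : ∫⁻ l in Ioc (0:ℝ) m, ENNReal.ofReal (l ^ (-r-1)) * min (ENNReal.ofReal l) M ≤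
            ENNReal.ofReal (m ^ (1-r) / (1-r)) := by
          have hle : ∀ l ∈ Ioc (0:ℝ) m, ENNReal.ofReal (l ^ (-r-1)) * min (ENNReal.ofReal l) M ≤
              ENNReal.ofReal (l ^ (-r)) := by
            intro l hl
            calc ENNReal.ofReal (l ^ (-r-1)) * min (ENNReal.ofReal l) M ≤
                ENNReal.ofReal (l ^ (-r-1)) * ENNReal.ofReal l := by
                  exact mul_le_mul_right (min_le_left _ _) _
              _ = ENNReal.ofReal (l ^ (-r)) := by
                  rw [← ENNReal.ofReal_mul (Real.rpow_nonneg hl.1.le _)]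
                  congr 1
                  rw [← Real.rpow_add_one hl.1.ne', show -r - 1 + 1 = -r by ring]
          calc ∫⁻ l in Ioc (0:ℝ) m, ENNReal.ofReal (l ^ (-r-1)) * min (ENNReal.ofReal l) M
              ≤ ∫⁻ l in Ioc (0:ℝ) m, ENNReal.ofReal (l ^ (-r)) := by
                apply setLIntegral_mono' measurableSet_Ioc hle
            _ = ENNReal.ofReal (m ^ (1-r) / (1-r)) := by
                have hint : IntegrableOn (fun l : ℝ => l ^ (-r)) (Ioc 0 m) := by
                  rw [← intervalIntegrable_iff_integrableOn_Ioc_of_le hm.le]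
                  exact intervalIntegral.intervalIntegrable_rpow' (by linarith)
                rw [← ofReal_integral_eq_lintegral_ofReal hint]
                · congr 1
                  rw [← intervalIntegral.integral_of_le hm.le]
                  rw [integral_rpow (Or.inl (by linarith))]
                  rw [show -r + 1 = 1 - r by ring, Real.zero_rpow (by linarith)]
                  simp
                · filter_upwards [ae_restrict_mem measurableSet_Ioc] with l hl
                  exact Real.rpow_nonneg hl.1.le _
        have t2 : ∫⁻ l in Ioi m, ENNReal.ofReal (l ^ (-r-1)) * min (ENNReal.ofReal l) M ≤
            M * ENNReal.ofReal (m ^ (-r) / r) := by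
          calc ∫⁻ l in Ioi m, ENNReal.ofReal (l ^ (-r-1)) * min (ENNReal.ofReal l) M
              ≤ ∫⁻ l in Ioi m, ENNReal.ofReal (l ^ (-r-1)) * M :=
                setLIntegral_mono' measurableSet_Ioi
                  (fun l _ => mul_le_mul_right (min_le_right _ _) _)
            _ = (∫⁻ l in Ioi m, ENNReal.ofReal (l ^ (-r-1))) * M := by
                rw [lintegral_mul_const _ hrpow]
            _ = M * ENNReal.ofReal (m ^ (-r) / r) := by
                rw [mul_comm]
                congr 1
                rw [← ofReal_integral_eq_lintegral_ofReal
                  (integrableOn_Ioi_rpow_of_lt (by linarith) hm)]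
                · rw [integral_Ioi_rpow_of_lt (by linarith) hm]
                  congr 1
                  rw [show -r - 1 + 1 = -r by ring]
                  field_simp
                · filter_upwards [ae_restrict_mem measurableSet_Ioi] with l hl
                  exact Real.rpow_nonneg (lt_trans hm hl).le _
        calc ENNReal.ofReal r * ((∫⁻ l in Ioc (0:ℝ) m, ENNReal.ofReal (l ^ (-r-1)) * min (ENNReal.ofReal l) M)
              + ∫⁻ l in Ioi m, ENNReal.ofReal (l ^ (-r-1)) * min (ENNReal.ofReal l) M)
            ≤ ENNReal.ofReal r * (ENNReal.ofReal (m ^ (1-r) / (1-r)) + M * ENNReal.ofReal (m ^ (-r) / r)) :=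
              mul_le_mul_right (add_le_add t1 t2) _
          _ = ENNReal.ofReal (1/(1-r)) * M ^ (1-r) := by
              rw [hMm, ENNReal.ofReal_rpow_of_pos hm, ← ENNReal.ofReal_mul hm.le,
                ← ENNReal.ofReal_add (div_nonneg (Real.rpow_nonneg hm.le _) (by linarith))
                  (mul_nonneg hm.le (div_nonneg (Real.rpow_nonneg hm.le _) hr0.le)),
                ← ENNReal.ofReal_mul hr0.le,
                ← ENNReal.ofReal_mul (div_nonneg zero_le_one (by linarith))]
              congr 1
              have hmm : m * m ^ (-r) = m ^ (1-r) := by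
                rw [show (1:ℝ) - r = 1 + (-r) by ring, Real.rpow_add hm, Real.rpow_one]
              have h1r : (1:ℝ) - r ≠ 0 := by linarith
              rw [← hmm]
              field_simp
              ring

lemma W_rightlim {g : ℝ → ℝ≥0∞} (c : ℝ) :
    ∫⁻ x in Ioi c, g x = ⨆ n : ℕ, ∫⁻ x in Ioi (c + 1/(n+1)), g x := by
  have hmono : Monotone fun n : ℕ => Ioi (c + 1/(n+1) : ℝ) := by
    intro a b hab
    apply Ioi_subset_Ioi
    have : (1:ℝ)/(b+1) ≤ 1/(a+1) := by
      apply one_div_le_one_div_of_le (by positivity)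
      have : (a:ℝ) ≤ b := Nat.cast_le.mpr hab
      linarith
    linarith
  have hunion : (⋃ n : ℕ, Ioi (c + 1/(n+1) : ℝ)) = Ioi c := by
    ext x
    simp only [mem_iUnion, mem_Ioi]
    constructor
    · rintro ⟨n, hn⟩; have : (0:ℝ) < 1/(n+1) := by positivity
      linarith
    · intro hx
      obtain ⟨n, hn⟩ := exists_nat_one_div_lt (sub_pos.mpr hx)
      exact ⟨n, by linarith⟩
  have := Monotone.measure_iUnion (μ := volume.withDensity g)
    (s := fun n : ℕ => Ioi (c + 1/(n+1) : ℝ)) hmono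
  rw [hunion] at this
  rw [← withDensity_apply _ measurableSet_Ioi, this]
  congr 1
  ext n
  rw [withDensity_apply _ measurableSet_Ioi]

lemma Phi_leftlim {U : ℝ → ℝ≥0∞} {c : ℝ} (hc : 0 < c) :
    ∫⁻ x in Ioc 0 c, U x = ⨆ n : ℕ, ∫⁻ x in Ioc 0 (c - 1/(n+1)), U x := by
  have h1 : (∫⁻ x in Ioc 0 c, U x) = ∫⁻ x in Ioo 0 c, U x := by
    apply setLIntegral_congr
    exact (Ioo_ae_eq_Ioc (α := ℝ)).symm
  have hmono : Monotone fun n : ℕ => Ioc (0:ℝ) (c - 1/(n+1)) := by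
    intro a b hab
    apply Ioc_subset_Ioc_right
    have : (1:ℝ)/(b+1) ≤ 1/(a+1) := by
      apply one_div_le_one_div_of_le (by positivity)
      have : (a:ℝ) ≤ b := Nat.cast_le.mpr hab
      linarith
    linarith
  have hunion : (⋃ n : ℕ, Ioc (0:ℝ) (c - 1/(n+1))) = Ioo 0 c := by
    ext x
    simp only [mem_iUnion, mem_Ioc, mem_Ioo]
    constructor
    · rintro ⟨n, hn1, hn2⟩
      have : (0:ℝ) < 1/(n+1) := by positivity
      exact ⟨hn1, by linarith⟩
    · rintro ⟨hx1, hx2⟩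
      obtain ⟨n, hn⟩ := exists_nat_one_div_lt (sub_pos.mpr hx2)
      exact ⟨n, hx1, by linarith⟩
  have := Monotone.measure_iUnion (μ := volume.withDensity U)
    (s := fun n : ℕ => Ioc (0:ℝ) (c - 1/(n+1))) hmono
  rw [hunion] at this
  rw [h1, ← withDensity_apply _ measurableSet_Ioo, this]
  congr 1
  ext n
  rw [withDensity_apply _ measurableSet_Ioc]

lemma level_W {g : ℝ → ℝ≥0∞} (s : ℝ) (lam : ℝ≥0∞) :
    ∫⁻ x in {y : ℝ | (∫⁻ z in Ioi y, g z) < lam} ∩ Ioi s, g x ≤ lam := by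
  set W := fun y : ℝ => ∫⁻ z in Ioi y, g z with hW
  set E := {y | W y < lam} ∩ Ioi s with hE
  rcases eq_empty_or_nonempty E with hEe | hEne
  · rw [hEe]; simp
  · set c := sInf E with hc
    have hbdd : BddBelow E := ⟨s, fun x hx => (hx.2 : s < x).le⟩
    have hEsub : E ⊆ Ici c := fun x hx => csInf_le hbdd hx
    calc ∫⁻ x in E, g x ≤ ∫⁻ x in Ici c, g x := lintegral_mono_set hEsub
      _ = ∫⁻ x in Ioi c, g x := setLIntegral_congr Ioi_ae_eq_Ici.symm
      _ = ⨆ n : ℕ, W (c + 1/(n+1)) := W_rightlim c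
      _ ≤ lam := by
          apply iSup_le; intro n
          have hlt : c < c + 1/(n+1) := by
            have : (0:ℝ) < 1/(n+1) := by positivity
            linarith
          obtain ⟨e, heE, he⟩ := (csInf_lt_iff hbdd hEne).mp hlt
          calc W (c + 1/(n+1)) ≤ W e := lintegral_mono_set (Ioi_subset_Ioi he.le)
            _ ≤ lam := le_of_lt heE.1

lemma level_Phi {U : ℝ → ℝ≥0∞} (t : ℝ) (lam : ℝ≥0∞) :
    ∫⁻ x in {y : ℝ | (∫⁻ z in Ioc 0 y, U z) < lam} ∩ Ioc 0 t, U x ≤ lam := by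
  set Φ := fun y : ℝ => ∫⁻ z in Ioc 0 y, U z with hΦ
  set E := {y | Φ y < lam} ∩ Ioc 0 t with hE
  rcases eq_empty_or_nonempty E with hEe | hEne
  · rw [hEe]; simp
  · set c := sSup E with hc
    have hbdd : BddAbove E := ⟨t, fun x hx => (hx.2.2 : x ≤ t)⟩
    have hc0 : 0 < c := lt_of_lt_of_le hEne.some_mem.2.1 (le_csSup hbdd hEne.some_mem)
    have hEsub : E ⊆ Ioc 0 c := fun x hx => ⟨hx.2.1, le_csSup hbdd hx⟩
    calc ∫⁻ x in E, U x ≤ ∫⁻ x in Ioc 0 c, U x := lintegral_mono_set hEsub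
      _ = ⨆ n : ℕ, Φ (c - 1/(n+1)) := Phi_leftlim hc0
      _ ≤ lam := by
          apply iSup_le; intro n
          have hlt : c - 1/(n+1) < c := by
            have : (0:ℝ) < 1/(n+1) := by positivity
            linarith
          obtain ⟨e, heE, he⟩ := (lt_csSup_iff hbdd hEne).mp hlt
          calc Φ (c - 1/(n+1)) ≤ Φ e := lintegral_mono_set (Ioc_subset_Ioc_right he.le)
            _ ≤ lam := le_of_lt heE.1

lemma ae_zero_on_downset {U : ℝ → ℝ≥0∞} (hU : Measurable U) {S : Set ℝ}
    (hSsub : S ⊆ Ioi 0)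
    (hdown : ∀ x ∈ S, ∀ y : ℝ, 0 < y → y ≤ x → y ∈ S)
    (hzero : ∀ x ∈ S, ∫⁻ z in Ioc 0 x, U z = 0) :
    ∀ᵐ s, s ∈ S → U s = 0 := by
  have hq : ∀ q : ℚ, (q:ℝ) ∈ S → ∀ᵐ s, s ∈ Ioc (0:ℝ) q → U s = 0 := by
    intro q hqS
    have h0 : ∫⁻ z in Ioc (0:ℝ) q, U z = 0 := hzero _ hqS
    have := (lintegral_eq_zero_iff hU).mp h0
    rw [Filter.EventuallyEq, ae_restrict_iff' measurableSet_Ioc] at this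
    filter_upwards [this] with s hs hmem
    exact hs hmem
  have hsup : ∀ᵐ s : ℝ, s ≠ sSup S := by
    rw [ae_iff]
    have : {a : ℝ | ¬a ≠ sSup S} = {sSup S} := by ext; simp
    rw [this]
    exact measure_singleton _
  have hcombined : ∀ᵐ s : ℝ, (∀ q : ℚ, (q:ℝ) ∈ S → s ∈ Ioc (0:ℝ) q → U s = 0) ∧ s ≠ sSup S := by
    refine Filter.Eventually.and ?_ hsup
    rw [ae_all_iff]
    intro q
    by_cases hqS : (q:ℝ) ∈ S
    · filter_upwards [hq q hqS] with s hs
      intro _; exact hs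
    · filter_upwards with s hqS' _
      exact absurd hqS' hqS
  filter_upwards [hcombined] with s ⟨hs1, hs2⟩ hsS
  by_cases hex : ∃ s' ∈ S, s < s'
  · obtain ⟨s', hs'S, hss'⟩ := hex
    obtain ⟨q, hq1, hq2⟩ := exists_rat_btwn hss'
    have hqS : (q:ℝ) ∈ S := hdown s' hs'S q (lt_trans (hSsub hsS) hq1) hq2.le
    exact hs1 q hqS ⟨hSsub hsS, hq1.le⟩
  · push_neg at hex
    have : s = sSup S := le_antisymm (le_csSup ⟨s, hex⟩ hsS)
      (csSup_le ⟨s, hsS⟩ hex)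
    exact absurd this hs2

lemma ofReal_abs_integral_le (f : ℝ → ℝ) (μ : Measure ℝ) :
    ENNReal.ofReal (|∫ t, f t ∂μ|) ≤ ∫⁻ t, ENNReal.ofReal (|f t|) ∂μ := by
  by_cases hf : Integrable f μ
  · refine le_trans (ENNReal.ofReal_le_ofReal ?_) (le_of_eq
      (ofReal_integral_eq_lintegral_ofReal hf.abs (ae_of_all _ fun t => abs_nonneg _)))
    simpa [Real.norm_eq_abs] using norm_integral_le_integral_norm f (μ := μ)
  · rw [integral_undef hf]
    simp

lemma tonelli_swap {C D : ℝ → ℝ≥0∞} (hC : Measurable C) (hD : Measurable D) :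
    ∫⁻ s in Ioi (0:ℝ), C s * ∫⁻ t in Ioi s, D t =
      ∫⁻ t in Ioi (0:ℝ), D t * ∫⁻ s in Ioc 0 t, C s := by
  have h1 : ∀ s ∈ Ioi (0:ℝ), C s * ∫⁻ t in Ioi s, D t =
      ∫⁻ t in Ioi (0:ℝ), C s * D t * (if s < t then 1 else 0) := by
    intro s hs
    have hpt : ∀ t : ℝ, C s * D t * (if s < t then 1 else 0) =
        C s * ((Ioi s).indicator D t) := by
      intro t
      simp only [Set.indicator_apply, mem_Ioi]
      by_cases h : s < t
      · simp [h]
      · simp [h]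
    simp_rw [hpt]
    rw [lintegral_const_mul _ (hD.indicator measurableSet_Ioi),
      setLIntegral_indicator measurableSet_Ioi,
      inter_eq_left.mpr (Ioi_subset_Ioi (le_of_lt hs))]
  have h2 : ∀ t ∈ Ioi (0:ℝ), (∫⁻ s in Ioi (0:ℝ), C s * D t * (if s < t then 1 else 0)) =
      D t * ∫⁻ s in Ioc 0 t, C s := by
    intro t ht
    have hpt : ∀ s : ℝ, C s * D t * (if s < t then 1 else 0) =
        D t * ((Iio t).indicator C s) := by
      intro s
      simp only [Set.indicator_apply, mem_Iio]
      by_cases h : s < t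
      · simp only [if_pos h]; ring
      · simp [h]
    simp_rw [hpt]
    rw [lintegral_const_mul _ (hC.indicator measurableSet_Iio),
      setLIntegral_indicator measurableSet_Iio]
    congr 1
    have : Iio t ∩ Ioi (0:ℝ) = Ioo 0 t := by
      ext x; simp [mem_Ioo, mem_Iio, mem_Ioi, and_comm]
    rw [this]
    exact setLIntegral_congr Ioo_ae_eq_Ioc
  rw [setLIntegral_congr_fun measurableSet_Ioi h1]
  rw [lintegral_lintegral_swap]
  · exact setLIntegral_congr_fun measurableSet_Ioi h2
  · apply Measurable.aemeasurable
    apply ((hC.comp measurable_fst).mul (hD.comp measurable_snd)).mul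
    exact Measurable.ite (measurableSet_lt measurable_fst measurable_snd)
      measurable_const measurable_const

end Aux

lemma rpow_cancel (x : ℝ≥0∞) (a : ℝ) (h1 : x ≠ 0) (h2 : x ≠ ⊤) : x ^ a * x ^ (-a) = 1 := by
  rw [← ENNReal.rpow_add _ _ h1 h2]
  simp


lemma holder_claim (p p' : ℝ) (hp : 1 < p) (hp' : p' = p / (p-1))
    (v f : ℝ → ℝ) (hv : Measurable v) (hf : Measurable f)
    (g W : ℝ → ℝ≥0∞)
    (hgdef : g = fun t => ENNReal.ofReal (v t ^ (1 - p')))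
    (hWdef : W = fun y => ∫⁻ z in Ioi y, g z)
    {s : ℝ} (hs : 0 < s) (hWs : W s ≠ ⊤)
    (hv0s : ∀ᵐ t ∂(volume.restrict (Ioi s)), 0 < v t)
    (hW0 : ∀ t, s < t → W t ≠ 0) :
    (ENNReal.ofReal |∫ t in Ioi s, f t|) ^ p ≤
      (ENNReal.ofReal p') ^ (p/p') * W s ^ (1/p'*(p/p')) *
        ∫⁻ t in Ioi s, ENNReal.ofReal (|f t| ^ p) * ENNReal.ofReal (v t) * W t ^ ((1:ℝ)/p') := by
  have hp0 : (0:ℝ) < p := lt_trans one_pos hp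
  have hp1 : (0:ℝ) < p - 1 := by linarith
  have hconj : p.HolderConjugate p' := hp' ▸ Real.HolderConjugate.conjExponent hp
  have hp'1 : 1 < p' := hconj.symm.lt
  have hp'0 : (0:ℝ) < p' := by linarith
  have hsum : 1/p + 1/p' = 1 := by
    have := hconj.inv_add_inv_eq_one
    simpa [one_div] using this
  have hgm : Measurable g := by rw [hgdef]; fun_prop
  have hWanti : Antitone W := by
    intro a b hab
    rw [hWdef]
    exact lintegral_mono_set (Ioi_subset_Ioi hab)
  have hWm : Measurable W := hWanti.measurable
  set φ := fun t => ENNReal.ofReal |f t| * ENNReal.ofReal (v t) ^ ((1:ℝ)/p) *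
    W t ^ ((1:ℝ)/(p*p')) with hφdef
  set ψ := fun t => ENNReal.ofReal (v t) ^ (-((1:ℝ)/p)) * W t ^ (-((1:ℝ)/(p*p'))) with hψdef
  have hφm : Measurable φ := by rw [hφdef]; fun_prop
  have hψm : Measurable ψ := by rw [hψdef]; fun_prop
  have hWne : ∀ t, s < t → W t ≠ 0 ∧ W t ≠ ⊤ := fun t ht =>
    ⟨hW0 t ht, ne_top_of_le_ne_top hWs (hWanti ht.le)⟩
  have habs : ENNReal.ofReal |∫ t in Ioi s, f t| ≤ ∫⁻ t in Ioi s, ENNReal.ofReal |f t| :=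
    ofReal_abs_integral_le f _
  have hstep1 : (∫⁻ t in Ioi s, ENNReal.ofReal |f t|) = ∫⁻ t in Ioi s, (φ * ψ) t := by
    apply lintegral_congr_ae
    filter_upwards [hv0s, ae_restrict_mem measurableSet_Ioi] with t hvt htmem
    obtain ⟨hW1, hW2⟩ := hWne t htmem
    have hV1 : ENNReal.ofReal (v t) ≠ 0 := (ENNReal.ofReal_pos.mpr hvt).ne'
    have hV2 : ENNReal.ofReal (v t) ≠ ⊤ := ENNReal.ofReal_ne_top
    simp only [Pi.mul_apply, hφdef, hψdef]
    calc ENNReal.ofReal |f t|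
        = ENNReal.ofReal |f t| *
            ((ENNReal.ofReal (v t) ^ ((1:ℝ)/p) * ENNReal.ofReal (v t) ^ (-((1:ℝ)/p))) *
             (W t ^ ((1:ℝ)/(p*p')) * W t ^ (-((1:ℝ)/(p*p'))))) := by
          rw [rpow_cancel _ _ hV1 hV2, rpow_cancel _ _ hW1 hW2]
          simp
      _ = ENNReal.ofReal |f t| * ENNReal.ofReal (v t) ^ ((1:ℝ)/p) * W t ^ ((1:ℝ)/(p*p')) *
            (ENNReal.ofReal (v t) ^ (-((1:ℝ)/p)) * W t ^ (-((1:ℝ)/(p*p')))) := by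
          ring
  have hH := ENNReal.lintegral_mul_le_Lp_mul_Lq (volume.restrict (Ioi s)) hconj
    hφm.aemeasurable hψm.aemeasurable
  rw [← hstep1] at hH
  have hφp : (∫⁻ t in Ioi s, φ t ^ p) =
      ∫⁻ t in Ioi s, ENNReal.ofReal (|f t| ^ p) * ENNReal.ofReal (v t) * W t ^ ((1:ℝ)/p') := by
    apply lintegral_congr_ae
    filter_upwards [hv0s] with t hvt
    simp only [hφdef]
    rw [ENNReal.mul_rpow_of_nonneg _ _ hp0.le, ENNReal.mul_rpow_of_nonneg _ _ hp0.le]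
    rw [← ENNReal.rpow_mul, ← ENNReal.rpow_mul]
    rw [show (1:ℝ)/p * p = 1 by field_simp, show (1:ℝ)/(p*p') * p = 1/p' by field_simp]
    rw [ENNReal.rpow_one, ENNReal.ofReal_rpow_of_nonneg (abs_nonneg _) hp0.le]
  have hψp' : (∫⁻ t in Ioi s, ψ t ^ p') = ∫⁻ t in Ioi s, g t * W t ^ (-((1:ℝ)/p)) := by
    apply lintegral_congr_ae
    filter_upwards [hv0s] with t hvt
    simp only [hψdef, hgdef]
    rw [ENNReal.mul_rpow_of_nonneg _ _ hp'0.le]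
    rw [← ENNReal.rpow_mul, ← ENNReal.rpow_mul]
    rw [show -((1:ℝ)/p) * p' = 1 - p' by rw [hp']; field_simp; ring,
      show -((1:ℝ)/(p*p')) * p' = -(1/p) by field_simp]
    rw [ENNReal.ofReal_rpow_of_pos hvt]
  have hkey : (∫⁻ t in Ioi s, g t * W t ^ (-((1:ℝ)/p))) ≤
      ENNReal.ofReal p' * W s ^ ((1:ℝ)/p') := by
    have h5 : (1:ℝ) - 1/p = 1/p' := by linarith
    have h := key_layer (show (0:ℝ) < 1/p by positivity)
      (show (1:ℝ)/p < 1 by rw [div_lt_one hp0]; exact hp)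
      (volume.restrict (Ioi s)) hgm hWm
      (by filter_upwards [ae_restrict_mem measurableSet_Ioi] with t htmem h0
          exact absurd h0 (hW0 t htmem))
      (M := W s) hWs
      (fun lam => by
        rw [Measure.restrict_restrict (show MeasurableSet {y | W y < lam} from hWm measurableSet_Iio)]
        simp only [hWdef]
        exact le_min (level_W s lam) (lintegral_mono_set inter_subset_right))
    rw [h5, one_div_one_div] at h
    exact h
  calc (ENNReal.ofReal |∫ t in Ioi s, f t|) ^ p
      ≤ ((∫⁻ t in Ioi s, φ t ^ p) ^ ((1:ℝ)/p) * (∫⁻ t in Ioi s, ψ t ^ p') ^ ((1:ℝ)/p')) ^ p :=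
        ENNReal.rpow_le_rpow (le_trans habs hH) hp0.le
    _ = (∫⁻ t in Ioi s, φ t ^ p) * ((∫⁻ t in Ioi s, ψ t ^ p') ^ ((1:ℝ)/p')) ^ p := by
        rw [ENNReal.mul_rpow_of_nonneg _ _ hp0.le, ← ENNReal.rpow_mul,
          show (1:ℝ)/p * p = 1 by field_simp, ENNReal.rpow_one]
    _ ≤ (∫⁻ t in Ioi s, φ t ^ p) * ((ENNReal.ofReal p' * W s ^ ((1:ℝ)/p')) ^ ((1:ℝ)/p')) ^ p := by
        rw [hψp']
        exact mul_le_mul_right (ENNReal.rpow_le_rpow (ENNReal.rpow_le_rpow hkey (by positivity)) hp0.le) _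
    _ = (ENNReal.ofReal p') ^ (p/p') * W s ^ (1/p'*(p/p')) *
        ∫⁻ t in Ioi s, ENNReal.ofReal (|f t| ^ p) * ENNReal.ofReal (v t) * W t ^ ((1:ℝ)/p') := by
        rw [hφp, ← ENNReal.rpow_mul, ENNReal.mul_rpow_of_nonneg _ _ (by positivity : (0:ℝ) ≤ 1/p' * p)]
        rw [← ENNReal.rpow_mul (W s)]
        rw [show (1:ℝ)/p' * ((1:ℝ)/p' * p) = 1/p'*(p/p') by ring]
        rw [show (1:ℝ)/p' * p = p/p' by ring]
        ring

lemma inner_claim (p p' : ℝ) (hp : 1 < p) (hp' : p' = p / (p-1))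
    (U Φ W : ℝ → ℝ≥0∞) (hUm : Measurable U)
    (hΦdef : Φ = fun y => ∫⁻ z in Ioc 0 y, U z)
    (A : ℝ≥0∞) (hAfin : A ≠ ⊤)
    {t : ℝ} (ht : 0 < t) (hΦt : Φ t ≠ ⊤)
    (hWbd : ∀ s : ℝ, 0 < s → W s ^ ((1:ℝ)/p') ≤ A * Φ s ^ (-((1:ℝ)/p)))
    (hΦ0 : ∀ᵐ s, s ∈ {y ∈ Ioi (0:ℝ) | Φ y = 0} → U s = 0) :
    ∫⁻ s in Ioc 0 t, U s * W s ^ ((1:ℝ)/p'*(p/p')) ≤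
      ENNReal.ofReal p * (A ^ (p/p') * Φ t ^ ((1:ℝ)/p)) := by
  have hp0 : (0:ℝ) < p := lt_trans one_pos hp
  have hp1 : (0:ℝ) < p - 1 := by linarith
  have hconj : p.HolderConjugate p' := hp' ▸ Real.HolderConjugate.conjExponent hp
  have hp'1 : 1 < p' := hconj.symm.lt
  have hp'0 : (0:ℝ) < p' := by linarith
  have hsum : 1/p + 1/p' = 1 := by
    have := hconj.inv_add_inv_eq_one
    simpa [one_div] using this
  have hΦmono : Monotone Φ := by
    intro a b hab
    rw [hΦdef]
    exact lintegral_mono_set (Ioc_subset_Ioc_right hab)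
  have hΦm : Measurable Φ := hΦmono.measurable
  have hAc : A ^ (p/p') ≠ ⊤ := ENNReal.rpow_ne_top_of_nonneg (by positivity) hAfin
  have hpt : ∀ s : ℝ, 0 < s → U s * W s ^ ((1:ℝ)/p'*(p/p')) ≤
      A ^ (p/p') * (U s * Φ s ^ (-((1:ℝ)/p'))) := by
    intro s hs
    have h1 : W s ^ ((1:ℝ)/p'*(p/p')) ≤ A ^ (p/p') * Φ s ^ (-((1:ℝ)/p')) := by
      calc W s ^ ((1:ℝ)/p'*(p/p')) = (W s ^ ((1:ℝ)/p')) ^ (p/p') := ENNReal.rpow_mul _ _ _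
        _ ≤ (A * Φ s ^ (-((1:ℝ)/p))) ^ (p/p') :=
            ENNReal.rpow_le_rpow (hWbd s hs) (by positivity)
        _ = A ^ (p/p') * Φ s ^ (-((1:ℝ)/p')) := by
            rw [ENNReal.mul_rpow_of_nonneg _ _ (by positivity : (0:ℝ) ≤ p/p'),
              ← ENNReal.rpow_mul]
            congr 1
            rw [show -((1:ℝ)/p) * (p/p') = -(1/p') by field_simp]
    calc U s * W s ^ ((1:ℝ)/p'*(p/p')) ≤ U s * (A ^ (p/p') * Φ s ^ (-((1:ℝ)/p'))) :=
          mul_le_mul_right h1 _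
      _ = A ^ (p/p') * (U s * Φ s ^ (-((1:ℝ)/p'))) := by ring
  have hkey : (∫⁻ s in Ioc 0 t, U s * Φ s ^ (-((1:ℝ)/p'))) ≤
      ENNReal.ofReal p * Φ t ^ ((1:ℝ)/p) := by
    have h6 : (1:ℝ) - 1/p' = 1/p := by linarith
    have h := key_layer (show (0:ℝ) < 1/p' by positivity)
      (show (1:ℝ)/p' < 1 by rw [div_lt_one hp'0]; exact hp'1)
      (volume.restrict (Ioc 0 t)) hUm hΦm
      (by
        filter_upwards [ae_restrict_mem measurableSet_Ioc, hΦ0.filter_mono (ae_mono Measure.restrict_le_self)]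
          with s hmem himp h0
        exact himp ⟨hmem.1, h0⟩)
      (M := Φ t) hΦt
      (fun lam => by
        rw [Measure.restrict_restrict (show MeasurableSet {y | Φ y < lam} from hΦm measurableSet_Iio)]
        simp only [hΦdef]
        exact le_min (level_Phi t lam) (lintegral_mono_set inter_subset_right))
    rw [h6, one_div_one_div] at h
    exact h
  calc ∫⁻ s in Ioc 0 t, U s * W s ^ ((1:ℝ)/p'*(p/p'))
      ≤ ∫⁻ s in Ioc 0 t, A ^ (p/p') * (U s * Φ s ^ (-((1:ℝ)/p'))) :=
        setLIntegral_mono' measurableSet_Ioc (fun s hs => hpt s hs.1)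
    _ = A ^ (p/p') * ∫⁻ s in Ioc 0 t, U s * Φ s ^ (-((1:ℝ)/p')) :=
        lintegral_const_mul' _ _ hAc
    _ ≤ A ^ (p/p') * (ENNReal.ofReal p * Φ t ^ ((1:ℝ)/p)) := mul_le_mul_right hkey _
    _ = ENNReal.ofReal p * (A ^ (p/p') * Φ t ^ ((1:ℝ)/p)) := by ring


theorem muckenhoupt_weighted_hardy (p p' : ℝ) (hp : 1 < p) (hp' : p' = p / (p - 1))
    (u v f : ℝ → ℝ) (hu : Measurable u) (hv : Measurable v) (hf : Measurable f)
    (hu0 : ∀ s, 0 < s → 0 ≤ u s)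
    (hv0 : ∀ᵐ s ∂(volume.restrict (Ioi (0 : ℝ))), 0 < v s)
    (A : ℝ≥0∞)
    (hA : A = ⨆ t : {t : ℝ // 0 < t},
      (∫⁻ s in Ioc 0 (t : ℝ), ENNReal.ofReal (u s)) ^ (1 / p) *
        (∫⁻ s in Ioi (t : ℝ), ENNReal.ofReal (v s ^ (1 - p'))) ^ (1 / p'))
    (hAfin : A ≠ ⊤) :
    (∫⁻ s in Ioi (0 : ℝ), ENNReal.ofReal (|∫ t in Ioi s, f t| ^ p * u s)) ^ (1 / p) ≤
      ENNReal.ofReal (p ^ (1 / p) * p' ^ (1 / p')) * A *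
        (∫⁻ s in Ioi (0 : ℝ), ENNReal.ofReal (|f s| ^ p * v s)) ^ (1 / p) := by
  have hp0 : (0:ℝ) < p := lt_trans one_pos hp
  have hp1 : (0:ℝ) < p - 1 := by linarith
  have hconj : p.HolderConjugate p' := hp' ▸ Real.HolderConjugate.conjExponent hp
  have hp'1 : 1 < p' := hconj.symm.lt
  have hp'0 : (0:ℝ) < p' := by linarith
  have hsum : 1/p + 1/p' = 1 := by
    have := hconj.inv_add_inv_eq_one
    simpa [one_div] using this
  set g : ℝ → ℝ≥0∞ := fun t => ENNReal.ofReal (v t ^ (1 - p')) with hgdef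
  set W : ℝ → ℝ≥0∞ := fun y => ∫⁻ z in Ioi y, g z with hWdef
  set U : ℝ → ℝ≥0∞ := fun t => ENNReal.ofReal (u t) with hUdef
  set Φ : ℝ → ℝ≥0∞ := fun y => ∫⁻ z in Ioc 0 y, U z with hΦdef
  have hgm : Measurable g := by rw [hgdef]; fun_prop
  have hUm : Measurable U := by rw [hUdef]; fun_prop
  have hWanti : Antitone W := by
    intro a b hab
    rw [hWdef]
    exact lintegral_mono_set (Ioi_subset_Ioi hab)
  have hWm : Measurable W := hWanti.measurable
  have hΦmono : Monotone Φ := by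
    intro a b hab
    rw [hΦdef]
    exact lintegral_mono_set (Ioc_subset_Ioc_right hab)
  have hΦm : Measurable Φ := hΦmono.measurable
  have hAbd : ∀ t : ℝ, 0 < t → Φ t ^ (1/p) * W t ^ (1/p') ≤ A := by
    intro t ht
    rw [hA]
    exact le_iSup (fun x : {t : ℝ // 0 < t} => Φ (x:ℝ) ^ (1/p) * W (x:ℝ) ^ (1/p')) ⟨t, ht⟩
  have hW0 : ∀ s : ℝ, 0 < s → W s ≠ 0 := by
    intro s hs h0
    simp only [hWdef] at h0
    have hgae : ∀ᵐ x ∂(volume.restrict (Ioi s)), g x = 0 := (lintegral_eq_zero_iff hgm).mp h0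
    have hgpos : ∀ᵐ x ∂(volume.restrict (Ioi s)), g x ≠ 0 := by
      have hsub := ae_restrict_of_ae_restrict_of_subset (Ioi_subset_Ioi hs.le) hv0
      filter_upwards [hsub] with x hx
      rw [hgdef]
      simpa using (ENNReal.ofReal_pos.mpr (Real.rpow_pos_of_pos hx _)).ne'
    have hfalse : ∀ᵐ x ∂(volume.restrict (Ioi s)), False := by
      filter_upwards [hgae, hgpos] with x h1 h2; exact h2 h1
    rw [ae_iff] at hfalse
    rw [show {a : ℝ | ¬False} = univ by ext; simp, Measure.restrict_apply_univ,
      Real.volume_Ioi] at hfalse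
    exact ENNReal.top_ne_zero hfalse
  rcases eq_or_ne A 0 with hA0 | hA0
  · -- degenerate case A = 0
    have hΦzero : ∀ x : ℝ, 0 < x → Φ x = 0 := by
      intro x hx
      have h := hAbd x hx
      rw [hA0] at h
      have hz := le_antisymm h (zero_le)
      rcases mul_eq_zero.mp hz with h1 | h1
      · rcases ENNReal.rpow_eq_zero_iff.mp h1 with ⟨h2, _⟩ | ⟨_, h3⟩
        · exact h2
        · exact absurd h3 (not_lt.mpr (by positivity))
      · rcases ENNReal.rpow_eq_zero_iff.mp h1 with ⟨h2, _⟩ | ⟨_, h3⟩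
        · exact absurd h2 (hW0 x hx)
        · exact absurd h3 (not_lt.mpr (by positivity))
    have hUz : ∀ᵐ s, s ∈ Ioi (0:ℝ) → U s = 0 := by
      apply ae_zero_on_downset hUm (subset_refl _) (fun _ _ y hy _ => hy)
      intro x hx
      have := hΦzero x hx
      simp only [hΦdef] at this
      exact this
    have hLHS : (∫⁻ s in Ioi (0:ℝ), ENNReal.ofReal (|∫ t in Ioi s, f t| ^ p * u s)) = 0 := by
      have hae : ∀ᵐ s ∂(volume.restrict (Ioi (0:ℝ))),
          ENNReal.ofReal (|∫ t in Ioi s, f t| ^ p * u s) = 0 := by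
        filter_upwards [hUz.filter_mono (ae_mono Measure.restrict_le_self),
          ae_restrict_mem measurableSet_Ioi] with s h1 h2
        have hU0 : U s = 0 := h1 h2
        simp only [hUdef] at hU0
        have hus : u s ≤ 0 := ENNReal.ofReal_eq_zero.mp hU0
        apply ENNReal.ofReal_eq_zero.mpr
        exact mul_nonpos_iff.mpr (Or.inl ⟨Real.rpow_nonneg (abs_nonneg _) _, hus⟩)
      rw [lintegral_congr_ae hae, lintegral_zero]
    rw [hLHS, ENNReal.zero_rpow_of_pos (by positivity)]
    exact zero_le
  · -- main case A ≠ 0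
    have hΦfin : ∀ s : ℝ, 0 < s → Φ s ≠ ⊤ := by
      intro s hs htop
      have h := hAbd s hs
      have hWne0 : W s ^ ((1:ℝ)/p') ≠ 0 := by
        intro h0
        rcases ENNReal.rpow_eq_zero_iff.mp h0 with ⟨h2, _⟩ | ⟨_, h3⟩
        exacts [absurd h2 (hW0 s hs), absurd h3 (not_lt.mpr (by positivity))]
      rw [htop, ENNReal.top_rpow_of_pos (by positivity), ENNReal.top_mul hWne0] at h
      exact hAfin (top_le_iff.mp h)
    have hWtopΦ : ∀ s : ℝ, 0 < s → W s = ⊤ → Φ s = 0 := by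
      intro s hs htop
      by_contra h0
      have h := hAbd s hs
      have hΦne : Φ s ^ ((1:ℝ)/p) ≠ 0 := by
        intro hz
        rcases ENNReal.rpow_eq_zero_iff.mp hz with ⟨h2, _⟩ | ⟨_, h3⟩
        exacts [h0 h2, absurd h3 (not_lt.mpr (by positivity))]
      rw [htop, ENNReal.top_rpow_of_pos (by positivity), ENNReal.mul_top hΦne] at h
      exact hAfin (top_le_iff.mp h)
    have hWbd : ∀ s : ℝ, 0 < s → W s ^ ((1:ℝ)/p') ≤ A * Φ s ^ (-((1:ℝ)/p)) := by
      intro s hs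
      rcases eq_or_ne (Φ s) 0 with h0 | h0
      · rw [h0, ENNReal.zero_rpow_of_neg (neg_lt_zero.mpr (by positivity)),
          ENNReal.mul_top hA0]
        exact le_top
      · calc W s ^ ((1:ℝ)/p')
            = (Φ s ^ ((1:ℝ)/p) * W s ^ ((1:ℝ)/p')) * Φ s ^ (-((1:ℝ)/p)) := by
              rw [mul_comm (Φ s ^ ((1:ℝ)/p)) (W s ^ ((1:ℝ)/p')), mul_assoc,
                ← ENNReal.rpow_add _ _ h0 (hΦfin s hs), add_neg_cancel,
                ENNReal.rpow_zero, mul_one]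
          _ ≤ A * Φ s ^ (-((1:ℝ)/p)) := mul_le_mul_left (hAbd s hs) _
    have hΦbd : ∀ s : ℝ, 0 < s → Φ s ^ ((1:ℝ)/p) ≤ A * W s ^ (-((1:ℝ)/p')) := by
      intro s hs
      rcases eq_or_ne (W s) ⊤ with htop | htop
      · rw [hWtopΦ s hs htop, ENNReal.zero_rpow_of_pos (by positivity)]
        exact zero_le
      · calc Φ s ^ ((1:ℝ)/p)
            = (Φ s ^ ((1:ℝ)/p) * W s ^ ((1:ℝ)/p')) * W s ^ (-((1:ℝ)/p')) := by
              rw [mul_assoc, ← ENNReal.rpow_add _ _ (hW0 s hs) htop, add_neg_cancel,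
                ENNReal.rpow_zero, mul_one]
          _ ≤ A * W s ^ (-((1:ℝ)/p')) := mul_le_mul_left (hAbd s hs) _
    have hUzeroΦ0 : ∀ᵐ s, s ∈ {y ∈ Ioi (0:ℝ) | Φ y = 0} → U s = 0 := by
      apply ae_zero_on_downset hUm (fun x hx => hx.1)
      · intro x hx y hy hyx
        exact ⟨hy, le_antisymm (le_trans (hΦmono hyx) (le_of_eq hx.2)) (zero_le)⟩
      · intro x hx
        have := hx.2
        simp only [hΦdef] at this
        exact this
    have hUzeroWtop : ∀ᵐ s, s ∈ {y ∈ Ioi (0:ℝ) | W y = ⊤} → U s = 0 := by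
      apply ae_zero_on_downset hUm (fun x hx => hx.1)
      · intro x hx y hy hyx
        exact ⟨hy, top_le_iff.mp (hx.2 ▸ hWanti hyx)⟩
      · intro x hx
        have := hWtopΦ x hx.1 hx.2
        simp only [hΦdef] at this
        exact this
    -- Step 2 : pointwise Hölder bound and integration
    have step2 : (∫⁻ s in Ioi (0:ℝ), ENNReal.ofReal (|∫ t in Ioi s, f t| ^ p * u s)) ≤
        (ENNReal.ofReal p') ^ (p/p') *
          ∫⁻ s in Ioi (0:ℝ), (U s * W s ^ ((1:ℝ)/p'*(p/p'))) *
            ∫⁻ t in Ioi s, ENNReal.ofReal (|f t| ^ p) * ENNReal.ofReal (v t) * W t ^ ((1:ℝ)/p') := by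
      rw [← lintegral_const_mul' _ _ (ENNReal.rpow_ne_top_of_nonneg (by positivity)
        ENNReal.ofReal_ne_top)]
      apply lintegral_mono_ae
      filter_upwards [ae_restrict_mem measurableSet_Ioi,
        hUzeroWtop.filter_mono (ae_mono Measure.restrict_le_self)] with s hs hzero
      have h1 : ENNReal.ofReal (|∫ t in Ioi s, f t| ^ p * u s) =
          (ENNReal.ofReal |∫ t in Ioi s, f t|) ^ p * U s := by
        rw [ENNReal.ofReal_mul (by positivity), hUdef,
          ENNReal.ofReal_rpow_of_nonneg (abs_nonneg _) hp0.le]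
      rcases eq_or_ne (W s) ⊤ with htop | htop
      · rw [h1, hzero ⟨hs, htop⟩, mul_zero]
        exact zero_le
      · rw [h1]
        have hcl := holder_claim p p' hp hp' v f hv hf g W hgdef hWdef hs htop
          (ae_restrict_of_ae_restrict_of_subset (Ioi_subset_Ioi (le_of_lt hs)) hv0)
          (fun t ht => hW0 t (lt_trans hs ht))
        calc (ENNReal.ofReal |∫ t in Ioi s, f t|) ^ p * U s
            ≤ ((ENNReal.ofReal p') ^ (p/p') * W s ^ (1/p'*(p/p')) *
              ∫⁻ t in Ioi s, ENNReal.ofReal (|f t| ^ p) * ENNReal.ofReal (v t) *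
                W t ^ ((1:ℝ)/p')) * U s := mul_le_mul_left hcl _
          _ = (ENNReal.ofReal p') ^ (p/p') * ((U s * W s ^ ((1:ℝ)/p'*(p/p'))) *
              ∫⁻ t in Ioi s, ENNReal.ofReal (|f t| ^ p) * ENNReal.ofReal (v t) *
                W t ^ ((1:ℝ)/p')) := by ring
    -- Step 3 : Tonelli
    have hCm : Measurable (fun s => U s * W s ^ ((1:ℝ)/p'*(p/p'))) := by fun_prop
    have hDm : Measurable (fun t => ENNReal.ofReal (|f t| ^ p) * ENNReal.ofReal (v t) *
        W t ^ ((1:ℝ)/p')) := by fun_prop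
    have step3 := tonelli_swap hCm hDm
    -- Step 4 : inner bound and final integral bound
    have step4 : (∫⁻ t in Ioi (0:ℝ), (ENNReal.ofReal (|f t| ^ p) * ENNReal.ofReal (v t) *
          W t ^ ((1:ℝ)/p')) * ∫⁻ s in Ioc 0 t, U s * W s ^ ((1:ℝ)/p'*(p/p'))) ≤
        (ENNReal.ofReal p * (A ^ (p/p') * A)) *
          ∫⁻ t in Ioi (0:ℝ), ENNReal.ofReal (|f t| ^ p) * ENNReal.ofReal (v t) := by
      have hconst : (ENNReal.ofReal p * (A ^ (p/p') * A)) ≠ ⊤ :=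
        ENNReal.mul_ne_top ENNReal.ofReal_ne_top
          (ENNReal.mul_ne_top (ENNReal.rpow_ne_top_of_nonneg
            (div_nonneg hp0.le hp'0.le) hAfin) hAfin)
      have hWΦ : ∀ t : ℝ, 0 < t → W t ^ ((1:ℝ)/p') * Φ t ^ ((1:ℝ)/p) ≤ A := by
        intro t ht
        rcases eq_or_ne (W t) ⊤ with htop | htop
        · rw [hWtopΦ t ht htop, ENNReal.zero_rpow_of_pos (by positivity), mul_zero]
          exact zero_le
        · calc W t ^ ((1:ℝ)/p') * Φ t ^ ((1:ℝ)/p)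
              ≤ W t ^ ((1:ℝ)/p') * (A * W t ^ (-((1:ℝ)/p'))) :=
                mul_le_mul_right (hΦbd t ht) _
            _ = A * (W t ^ ((1:ℝ)/p') * W t ^ (-((1:ℝ)/p'))) := by ring
            _ = A := by rw [rpow_cancel _ _ (hW0 t ht) htop, mul_one]
      calc (∫⁻ t in Ioi (0:ℝ), (ENNReal.ofReal (|f t| ^ p) * ENNReal.ofReal (v t) *
            W t ^ ((1:ℝ)/p')) * ∫⁻ s in Ioc 0 t, U s * W s ^ ((1:ℝ)/p'*(p/p')))
          ≤ ∫⁻ t in Ioi (0:ℝ), (ENNReal.ofReal p * (A ^ (p/p') * A)) *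
              (ENNReal.ofReal (|f t| ^ p) * ENNReal.ofReal (v t)) := by
            apply lintegral_mono_ae
            filter_upwards [ae_restrict_mem measurableSet_Ioi] with t ht
            have hinner := inner_claim p p' hp hp' U Φ W hUm hΦdef A hAfin ht
              (hΦfin t ht) hWbd hUzeroΦ0
            calc (ENNReal.ofReal (|f t| ^ p) * ENNReal.ofReal (v t) *
                  W t ^ ((1:ℝ)/p')) * ∫⁻ s in Ioc 0 t, U s * W s ^ ((1:ℝ)/p'*(p/p'))
                ≤ (ENNReal.ofReal (|f t| ^ p) * ENNReal.ofReal (v t) *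
                  W t ^ ((1:ℝ)/p')) * (ENNReal.ofReal p * (A ^ (p/p') * Φ t ^ ((1:ℝ)/p))) :=
                  mul_le_mul_right hinner _
              _ = (ENNReal.ofReal p * A ^ (p/p')) *
                  ((ENNReal.ofReal (|f t| ^ p) * ENNReal.ofReal (v t)) *
                    (W t ^ ((1:ℝ)/p') * Φ t ^ ((1:ℝ)/p))) := by ring
              _ ≤ (ENNReal.ofReal p * A ^ (p/p')) *
                  ((ENNReal.ofReal (|f t| ^ p) * ENNReal.ofReal (v t)) * A) :=
                  mul_le_mul_right (mul_le_mul_right (hWΦ t ht) _) _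
              _ = (ENNReal.ofReal p * (A ^ (p/p') * A)) *
                  (ENNReal.ofReal (|f t| ^ p) * ENNReal.ofReal (v t)) := by ring
        _ = (ENNReal.ofReal p * (A ^ (p/p') * A)) *
              ∫⁻ t in Ioi (0:ℝ), ENNReal.ofReal (|f t| ^ p) * ENNReal.ofReal (v t) :=
            lintegral_const_mul' _ _ hconst
    -- assemble
    have hR : (∫⁻ t in Ioi (0:ℝ), ENNReal.ofReal (|f t| ^ p) * ENNReal.ofReal (v t)) =
        ∫⁻ s in Ioi (0:ℝ), ENNReal.ofReal (|f s| ^ p * v s) :=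
      lintegral_congr fun s => (ENNReal.ofReal_mul (by positivity)).symm
    have hApow : A ^ (p/p') * A = A ^ p := by
      have h7 : p/p' + 1 = p := by rw [hp']; field_simp; ring
      calc A ^ (p/p') * A = A ^ (p/p') * A ^ (1:ℝ) := by rw [ENNReal.rpow_one]
        _ = A ^ (p/p' + 1) := (ENNReal.rpow_add _ _ hA0 hAfin).symm
        _ = A ^ p := by rw [h7]
    have Itotal : (∫⁻ s in Ioi (0:ℝ), ENNReal.ofReal (|∫ t in Ioi s, f t| ^ p * u s)) ≤
        ENNReal.ofReal p * (ENNReal.ofReal p') ^ (p/p') * A ^ p *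
          ∫⁻ s in Ioi (0:ℝ), ENNReal.ofReal (|f s| ^ p * v s) := by
      calc (∫⁻ s in Ioi (0:ℝ), ENNReal.ofReal (|∫ t in Ioi s, f t| ^ p * u s))
          ≤ (ENNReal.ofReal p') ^ (p/p') *
              ∫⁻ s in Ioi (0:ℝ), (U s * W s ^ ((1:ℝ)/p'*(p/p'))) *
                ∫⁻ t in Ioi s, ENNReal.ofReal (|f t| ^ p) * ENNReal.ofReal (v t) *
                  W t ^ ((1:ℝ)/p') := step2
        _ = (ENNReal.ofReal p') ^ (p/p') *
              ∫⁻ t in Ioi (0:ℝ), (ENNReal.ofReal (|f t| ^ p) * ENNReal.ofReal (v t) *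
                W t ^ ((1:ℝ)/p')) * ∫⁻ s in Ioc 0 t, U s * W s ^ ((1:ℝ)/p'*(p/p')) := by
            rw [step3]
        _ ≤ (ENNReal.ofReal p') ^ (p/p') * ((ENNReal.ofReal p * (A ^ (p/p') * A)) *
              ∫⁻ t in Ioi (0:ℝ), ENNReal.ofReal (|f t| ^ p) * ENNReal.ofReal (v t)) :=
            mul_le_mul_right step4 _
        _ = ENNReal.ofReal p * (ENNReal.ofReal p') ^ (p/p') * A ^ p *
              ∫⁻ s in Ioi (0:ℝ), ENNReal.ofReal (|f s| ^ p * v s) := by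
            rw [hR, hApow]
            ring
    calc (∫⁻ s in Ioi (0:ℝ), ENNReal.ofReal (|∫ t in Ioi s, f t| ^ p * u s)) ^ (1/p)
        ≤ (ENNReal.ofReal p * (ENNReal.ofReal p') ^ (p/p') * A ^ p *
            ∫⁻ s in Ioi (0:ℝ), ENNReal.ofReal (|f s| ^ p * v s)) ^ (1/p) :=
          ENNReal.rpow_le_rpow Itotal (by positivity)
      _ = (ENNReal.ofReal p) ^ ((1:ℝ)/p) * ((ENNReal.ofReal p') ^ (p/p')) ^ ((1:ℝ)/p) *
            (A ^ p) ^ ((1:ℝ)/p) *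
            (∫⁻ s in Ioi (0:ℝ), ENNReal.ofReal (|f s| ^ p * v s)) ^ ((1:ℝ)/p) := by
          rw [ENNReal.mul_rpow_of_nonneg _ _ (by positivity : (0:ℝ) ≤ 1/p),
            ENNReal.mul_rpow_of_nonneg _ _ (by positivity : (0:ℝ) ≤ 1/p),
            ENNReal.mul_rpow_of_nonneg _ _ (by positivity : (0:ℝ) ≤ 1/p)]
      _ = ENNReal.ofReal (p ^ (1/p) * p' ^ (1/p')) * A *
            (∫⁻ s in Ioi (0:ℝ), ENNReal.ofReal (|f s| ^ p * v s)) ^ (1/p) := by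
          rw [← ENNReal.rpow_mul (ENNReal.ofReal p'), ← ENNReal.rpow_mul A,
            show p/p' * (1/p) = 1/p' by field_simp,
            show p * (1/p) = 1 by field_simp, ENNReal.rpow_one]
          rw [ENNReal.ofReal_mul (by positivity), ← ENNReal.ofReal_rpow_of_pos hp0,
            ← ENNReal.ofReal_rpow_of_pos hp'0]
end

section
/- Let $N > p > 1$ and let $\psi : (0,\infty) \to [0,\infty)$ be a nonincreasing measurable function with $\psi(s) \to 0$ as $s \to \infty$, which is locally absolutely continuous. Then $\int_0^\infty s^{-p/N} \psi(s)^p \, ds \leq p \left( \frac{N(p-1)p'}{N-p} \right)^{p-1} \cdot \frac{N}{N-p} \int_0^\infty s^{p - p/N} |\psi'(s)|^p \, ds$, where $p' = p/(p-1)$. -/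
open MeasureTheory Set Filter
open Topology
open scoped ENNReal

lemma my_deriv_nonpos {ψ : ℝ → ℝ} (hmono : AntitoneOn ψ (Ioi 0)) {t : ℝ} (ht : 0 < t) :
    deriv ψ t ≤ 0 := by
  by_cases hd : DifferentiableAt ℝ ψ t
  · have h1 : Tendsto (slope ψ t) (𝓝[>] t) (𝓝 (deriv ψ t)) :=
      (hasDerivAt_iff_tendsto_slope.1 hd.hasDerivAt).mono_left
        (nhdsWithin_mono _ (fun y hy => ne_of_gt hy))
    refine le_of_tendsto h1 ?_
    filter_upwards [self_mem_nhdsWithin] with y hy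
    have hy' : t < y := hy
    have : ψ y ≤ ψ t := hmono ht (lt_trans ht hy') hy'.le
    rw [slope_def_field]
    exact div_nonpos_of_nonpos_of_nonneg (by linarith) (by linarith)
  · simp [deriv_zero_of_not_differentiableAt hd]

lemma my_ofReal_setIntegral_le {f : ℝ → ℝ} {A : Set ℝ} (hA : MeasurableSet A)
    (hf : ∀ x ∈ A, 0 ≤ f x) :
    ENNReal.ofReal (∫ x in A, f x) ≤ ∫⁻ x in A, ENNReal.ofReal (f x) := by
  by_cases hi : IntegrableOn f A volume
  · rw [ofReal_integral_eq_lintegral_ofReal hi ((ae_restrict_iff' hA).2 (ae_of_all _ hf))]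
  · rw [integral_undef hi]; simp

lemma my_lint_Ioi_rpow {a c : ℝ} (ha : a < -1) (hc : 0 < c) :
    ∫⁻ t in Ioi c, ENNReal.ofReal (t ^ a) = ENNReal.ofReal (-c ^ (a + 1) / (a + 1)) := by
  rw [← integral_Ioi_rpow_of_lt ha hc,
    ofReal_integral_eq_lintegral_ofReal (integrableOn_Ioi_rpow_of_lt ha hc)
      ((ae_restrict_iff' measurableSet_Ioi).2 (ae_of_all _ (fun t ht =>
        Real.rpow_nonneg (le_of_lt (hc.trans ht)) a)))]

lemma my_lint_Ioo_rpow {a t : ℝ} (ha : -1 < a) (ht : 0 < t) :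
    ∫⁻ s in Ioo 0 t, ENNReal.ofReal (s ^ a) = ENNReal.ofReal (t ^ (a + 1) / (a + 1)) := by
  rw [setLIntegral_congr Ioo_ae_eq_Ioc]
  have hint : IntegrableOn (fun s : ℝ => s ^ a) (Ioc 0 t) volume := by
    have := (intervalIntegral.intervalIntegrable_rpow' (a := 0) (b := t) ha)
    rwa [intervalIntegrable_iff_integrableOn_Ioc_of_le ht.le] at this
  rw [← ofReal_integral_eq_lintegral_ofReal hint
      ((ae_restrict_iff' measurableSet_Ioc).2 (ae_of_all _ (fun s hs =>
        Real.rpow_nonneg hs.1.le a)))]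
  congr 1
  rw [← intervalIntegral.integral_of_le ht.le, integral_rpow (Or.inl ha)]
  rw [Real.zero_rpow (by linarith), sub_zero]

lemma my_repr {ψ : ℝ → ℝ} (hmono : AntitoneOn ψ (Ioi 0))
    (hlim : Tendsto ψ atTop (nhds 0))
    (hAC : ∀ a b : ℝ, 0 < a → a ≤ b → ψ b - ψ a = ∫ t in a..b, deriv ψ t)
    {s : ℝ} (hs : 0 < s) :
    ENNReal.ofReal (ψ s) ≤ ∫⁻ t in Ioi s, ENNReal.ofReal (-deriv ψ t) := by
  have key : ∀ b : ℝ, s ≤ b →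
      ENNReal.ofReal (ψ s) ≤ ENNReal.ofReal (ψ b) + ∫⁻ t in Ioi s, ENNReal.ofReal (-deriv ψ t) := by
    intro b hb
    have h1 : ψ s = ψ b + ∫ t in s..b, (-deriv ψ t) := by
      rw [intervalIntegral.integral_neg, ← hAC s b hs hb]; ring
    calc ENNReal.ofReal (ψ s) = ENNReal.ofReal (ψ b + ∫ t in s..b, (-deriv ψ t)) := by rw [← h1]
      _ ≤ ENNReal.ofReal (ψ b) + ENNReal.ofReal (∫ t in s..b, (-deriv ψ t)) :=
          ENNReal.ofReal_add_le
      _ ≤ ENNReal.ofReal (ψ b) + ∫⁻ t in Ioi s, ENNReal.ofReal (-deriv ψ t) := by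
          gcongr
          rw [intervalIntegral.integral_of_le hb]
          calc ENNReal.ofReal (∫ t in Ioc s b, (-deriv ψ t)) ≤
              ∫⁻ t in Ioc s b, ENNReal.ofReal (-deriv ψ t) := by
                refine my_ofReal_setIntegral_le measurableSet_Ioc (fun t htm => ?_)
                simpa using my_deriv_nonpos hmono (lt_trans hs htm.1)
            _ ≤ ∫⁻ t in Ioi s, ENNReal.ofReal (-deriv ψ t) :=
                lintegral_mono_set Ioc_subset_Ioi_self
  have h2 : Tendsto (fun b => ENNReal.ofReal (ψ b) +
      ∫⁻ t in Ioi s, ENNReal.ofReal (-deriv ψ t)) atTop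
      (nhds (0 + ∫⁻ t in Ioi s, ENNReal.ofReal (-deriv ψ t))) := by
    have := (ENNReal.tendsto_ofReal hlim).add
      (tendsto_const_nhds (x := ∫⁻ t in Ioi s, ENNReal.ofReal (-deriv ψ t)) (f := atTop))
    simpa using this
  rw [zero_add] at h2
  exact ge_of_tendsto h2 (eventually_atTop.2 ⟨s, key⟩)

lemma my_tonelli (K : ℝ → ℝ≥0∞) (hK : Measurable K) (a : ℝ) :
    ∫⁻ s in Ioi (0:ℝ), ENNReal.ofReal (s ^ a) * ∫⁻ t in Ioi s, K t
      = ∫⁻ t in Ioi (0:ℝ), (∫⁻ s in Ioo 0 t, ENNReal.ofReal (s ^ a)) * K t := by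
  set S : Set (ℝ × ℝ) := {q : ℝ × ℝ | 0 < q.1 ∧ q.1 < q.2} with hS
  have hSm : MeasurableSet S := by
    apply MeasurableSet.inter
    · exact measurable_fst measurableSet_Ioi
    · exact measurableSet_lt measurable_fst measurable_snd
  set F : ℝ × ℝ → ℝ≥0∞ := S.indicator (fun q => ENNReal.ofReal (q.1 ^ a) * K q.2) with hF
  have hFm : Measurable F := by
    apply Measurable.indicator _ hSm
    exact Measurable.mul (by fun_prop) (hK.comp measurable_snd)
  have lhs_eq : ∫⁻ s in Ioi (0:ℝ), ENNReal.ofReal (s ^ a) * ∫⁻ t in Ioi s, K t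
      = ∫⁻ s, ∫⁻ t, F (s, t) := by
    rw [← lintegral_indicator measurableSet_Ioi]
    congr 1
    ext s
    by_cases hs : 0 < s
    · rw [indicator_of_mem (show s ∈ Ioi (0:ℝ) from hs)]
      have : ∀ t : ℝ, F (s, t) = (Ioi s).indicator (fun t => ENNReal.ofReal (s ^ a) * K t) t := by
        intro t
        by_cases hts : s < t
        · rw [hF, indicator_of_mem (show (s,t) ∈ S from ⟨hs, hts⟩), indicator_of_mem (show t ∈ Ioi s from hts)]
        · rw [hF, indicator_of_notMem (show (s,t) ∉ S from fun h => hts h.2),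
            indicator_of_notMem (show t ∉ Ioi s from hts)]
      simp_rw [this]
      rw [lintegral_indicator measurableSet_Ioi, lintegral_const_mul' _ _ ENNReal.ofReal_ne_top]
    · rw [indicator_of_notMem (show s ∉ Ioi (0:ℝ) from hs)]
      have : ∀ t : ℝ, F (s, t) = 0 := fun t =>
        indicator_of_notMem (fun h => hs h.1) _
      simp [this]
  have rhs_eq : ∫⁻ t in Ioi (0:ℝ), (∫⁻ s in Ioo 0 t, ENNReal.ofReal (s ^ a)) * K t
      = ∫⁻ t, ∫⁻ s, F (s, t) := by
    rw [← lintegral_indicator measurableSet_Ioi]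
    congr 1
    ext t
    by_cases ht : 0 < t
    · rw [indicator_of_mem (show t ∈ Ioi (0:ℝ) from ht)]
      have : ∀ s : ℝ, F (s, t) = (Ioo 0 t).indicator
          (fun s => ENNReal.ofReal (s ^ a) * K t) s := by
        intro s
        by_cases hst : s ∈ Ioo 0 t
        · rw [hF, indicator_of_mem (show (s,t) ∈ S from ⟨hst.1, hst.2⟩), indicator_of_mem hst]
        · rw [hF, indicator_of_notMem (show (s,t) ∉ S from fun h => hst ⟨h.1, h.2⟩),
            indicator_of_notMem hst]
      simp_rw [this]
      rw [lintegral_indicator measurableSet_Ioo, lintegral_mul_const'' _ (by fun_prop)]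
    · rw [indicator_of_notMem (show t ∉ Ioi (0:ℝ) from ht)]
      have : ∀ s : ℝ, F (s, t) = 0 := fun s =>
        indicator_of_notMem (fun h => ht (lt_trans h.1 h.2)) _
      simp [this]
  rw [lhs_eq, rhs_eq]
  exact lintegral_lintegral_swap hFm.aemeasurable

lemma my_holder {ψ : ℝ → ℝ} (hmono : AntitoneOn ψ (Ioi 0))
    (hlim : Tendsto ψ atTop (nhds 0))
    (hAC : ∀ a b : ℝ, 0 < a → a ≤ b → ψ b - ψ a = ∫ t in a..b, deriv ψ t)
    {p p' β δ : ℝ} (hp : 1 < p) (hpq : p.HolderConjugate p')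
    (hβ : β * p' = 1 + δ) (hδ : 0 < δ) {s : ℝ} (hs : 0 < s) :
    ENNReal.ofReal (ψ s) ^ p ≤
      (∫⁻ t in Ioi s, ENNReal.ofReal (-deriv ψ t) ^ p * ENNReal.ofReal (t ^ (β * p))) *
        ENNReal.ofReal (s ^ (-δ) / δ) ^ (p - 1) := by
  have hp0 : (0:ℝ) ≤ p := by linarith
  set G : ℝ → ℝ≥0∞ := fun t => ENNReal.ofReal (-deriv ψ t) with hG
  set f : ℝ → ℝ≥0∞ := fun t => G t * ENNReal.ofReal (t ^ β) with hf
  set g : ℝ → ℝ≥0∞ := fun t => ENNReal.ofReal (t ^ (-β)) with hg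
  have hGm : Measurable G := by
    apply Measurable.ennreal_ofReal
    exact (measurable_deriv ψ).neg
  have hfm : Measurable f := hGm.mul (by fun_prop)
  have hgm : Measurable g := by fun_prop
  have step1 : ∫⁻ t in Ioi s, G t = ∫⁻ t in Ioi s, (f * g) t := by
    refine setLIntegral_congr_fun measurableSet_Ioi (fun t ht => ?_) |>.symm.symm
    have ht0 : (0:ℝ) < t := hs.trans ht
    show G t = f t * g t
    rw [hf, hg, mul_assoc, ← ENNReal.ofReal_mul (Real.rpow_nonneg ht0.le β),
      ← Real.rpow_add ht0, add_neg_cancel, Real.rpow_zero, ENNReal.ofReal_one, mul_one]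
  have holder := ENNReal.lintegral_mul_le_Lp_mul_Lq (volume.restrict (Ioi s)) hpq
    hfm.aemeasurable hgm.aemeasurable
  have hA : ∫⁻ t in Ioi s, f t ^ p
      = ∫⁻ t in Ioi s, ENNReal.ofReal (-deriv ψ t) ^ p * ENNReal.ofReal (t ^ (β * p)) := by
    refine setLIntegral_congr_fun measurableSet_Ioi (fun t ht => ?_)
    have ht0 : (0:ℝ) < t := hs.trans ht
    rw [hf, ENNReal.mul_rpow_of_nonneg _ _ hp0,
      ENNReal.ofReal_rpow_of_nonneg (Real.rpow_nonneg ht0.le β) hp0,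
      ← Real.rpow_mul ht0.le]
  have hB : ∫⁻ t in Ioi s, g t ^ p' = ENNReal.ofReal (s ^ (-δ) / δ) := by
    have e1 : ∫⁻ t in Ioi s, g t ^ p' = ∫⁻ t in Ioi s, ENNReal.ofReal (t ^ (-(1 + δ))) := by
      refine setLIntegral_congr_fun measurableSet_Ioi (fun t ht => ?_)
      have ht0 : (0:ℝ) < t := hs.trans ht
      rw [hg, ENNReal.ofReal_rpow_of_nonneg (Real.rpow_nonneg ht0.le _) hpq.symm.nonneg,
        ← Real.rpow_mul ht0.le]
      congr 2
      rw [neg_mul, hβ]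
    rw [e1, my_lint_Ioi_rpow (by linarith) hs]
    congr 1
    rw [show -(1 + δ) + 1 = -δ by ring]
    rw [neg_div_neg_eq]
  have main : ENNReal.ofReal (ψ s) ≤
      (∫⁻ t in Ioi s, f t ^ p) ^ (1/p) * ENNReal.ofReal (s ^ (-δ) / δ) ^ (1/p') := by
    calc ENNReal.ofReal (ψ s) ≤ ∫⁻ t in Ioi s, G t := my_repr hmono hlim hAC hs
      _ = ∫⁻ t in Ioi s, (f * g) t := step1
      _ ≤ (∫⁻ t in Ioi s, f t ^ p) ^ (1/p) * (∫⁻ t in Ioi s, g t ^ p') ^ (1/p') := holder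
      _ = _ := by rw [hB]
  calc ENNReal.ofReal (ψ s) ^ p
      ≤ ((∫⁻ t in Ioi s, f t ^ p) ^ (1/p) * ENNReal.ofReal (s ^ (-δ) / δ) ^ (1/p')) ^ p :=
        ENNReal.rpow_le_rpow main hp0
    _ = (∫⁻ t in Ioi s, f t ^ p) * ENNReal.ofReal (s ^ (-δ) / δ) ^ (p - 1) := by
        rw [ENNReal.mul_rpow_of_nonneg _ _ hp0, ← ENNReal.rpow_mul, ← ENNReal.rpow_mul]
        congr 1
        · rw [one_div, inv_mul_cancel₀ (by positivity : p ≠ 0), ENNReal.rpow_one]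
        · congr 1
          have h1 : p'⁻¹ = 1 - p⁻¹ := by
            have := hpq.inv_add_inv_eq_one; linarith
          rw [one_div, h1, sub_mul, one_mul, inv_mul_cancel₀ (by positivity : p ≠ 0)]
    _ = _ := by rw [hA]

theorem rearranged_lorentz_hardy (p N p' : ℝ) (hp : 1 < p) (hpN : p < N)
    (hp' : p' = p / (p - 1)) (ψ : ℝ → ℝ)
    (hmono : AntitoneOn ψ (Ioi 0)) (hpos : ∀ s, 0 < s → 0 ≤ ψ s)
    (hmeas : Measurable ψ)
    (hlim : Tendsto ψ atTop (nhds 0))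
    (hAC : ∀ a b : ℝ, 0 < a → a ≤ b → ψ b - ψ a = ∫ t in a..b, deriv ψ t) :
    ∫⁻ s in Ioi (0 : ℝ), ENNReal.ofReal (s ^ (-(p / N)) * ψ s ^ p) ≤
      ENNReal.ofReal (p * (N * (p - 1) * p' / (N - p)) ^ (p - 1) * (N / (N - p))) *
        ∫⁻ s in Ioi (0 : ℝ), ENNReal.ofReal (s ^ (p - p / N) * |deriv ψ s| ^ p) := by
  have hp0 : (0:ℝ) < p := lt_trans zero_lt_one hp
  have hp1 : (0:ℝ) ≤ p - 1 := by linarith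
  have hN0 : (0:ℝ) < N := lt_trans hp0 hpN
  have hNp : (0:ℝ) < N - p := by linarith
  set δ : ℝ := (N - p) / (p * N) with hδdef
  have hδ : 0 < δ := div_pos hNp (mul_pos hp0 hN0)
  have hpq : p.HolderConjugate p' := (Real.holderConjugate_iff_eq_conjExponent hp).2 hp'
  have hp'0 : p' ≠ 0 := ne_of_gt hpq.symm.pos
  set β : ℝ := (1 + δ) / p' with hβdef
  have hβ : β * p' = 1 + δ := div_mul_cancel₀ _ hp'0
  have hβp : β * p = (1 + δ) * (p - 1) := by
    rw [hβdef, hp']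
    field_simp
    try ring
  have hexp1 : -(p / N) + -δ * (p - 1) = δ - 1 := by
    rw [hδdef]
    field_simp
    try ring
  have hexp2 : δ + β * p = p - p / N := by
    rw [hβp, hδdef]
    field_simp
    try ring
  have hderivm : Measurable (deriv ψ) := measurable_deriv ψ
  set K : ℝ → ℝ≥0∞ := fun t =>
    ENNReal.ofReal (-deriv ψ t) ^ p * ENNReal.ofReal (t ^ (β * p)) with hK
  have hKm : Measurable K := by
    apply Measurable.mul
    · exact (hderivm.neg.ennreal_ofReal).pow_const _
    · fun_prop
  set A : ℝ → ℝ≥0∞ := fun s => ∫⁻ t in Ioi s, K t with hA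
  have hAanti : Antitone A := fun s s' h => lintegral_mono_set (Ioi_subset_Ioi h)
  have hAm : Measurable A := hAanti.measurable
  -- pointwise bound
  have pointwise : ∀ s ∈ Ioi (0:ℝ),
      ENNReal.ofReal (s ^ (-(p / N)) * ψ s ^ p) ≤
        ENNReal.ofReal (δ ^ (-(p - 1))) * (ENNReal.ofReal (s ^ (δ - 1)) * A s) := by
    intro s hs
    have hs0 : (0:ℝ) < s := hs
    have h1 : ENNReal.ofReal (s ^ (-(p / N)) * ψ s ^ p)
        = ENNReal.ofReal (s ^ (-(p / N))) * ENNReal.ofReal (ψ s) ^ p := by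
      rw [ENNReal.ofReal_mul (Real.rpow_nonneg hs0.le _),
        ENNReal.ofReal_rpow_of_nonneg (hpos s hs0) hp0.le]
    rw [h1]
    have h2 := my_holder hmono hlim hAC hp hpq hβ hδ hs0
    calc ENNReal.ofReal (s ^ (-(p / N))) * ENNReal.ofReal (ψ s) ^ p
        ≤ ENNReal.ofReal (s ^ (-(p / N))) *
            (A s * ENNReal.ofReal (s ^ (-δ) / δ) ^ (p - 1)) := by
          exact mul_le_mul_right h2 _
      _ = (ENNReal.ofReal (s ^ (-(p / N))) * ENNReal.ofReal (s ^ (-δ) / δ) ^ (p - 1)) * A s := by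
          ring
      _ = ENNReal.ofReal (δ ^ (-(p - 1))) * (ENNReal.ofReal (s ^ (δ - 1)) * A s) := by
          rw [← mul_assoc]
          congr 1
          rw [ENNReal.ofReal_rpow_of_nonneg
            (div_nonneg (Real.rpow_nonneg hs0.le _) hδ.le) hp1,
            ← ENNReal.ofReal_mul (Real.rpow_nonneg hs0.le _),
            ← ENNReal.ofReal_mul (Real.rpow_nonneg hδ.le _)]
          congr 1
          rw [Real.div_rpow (Real.rpow_nonneg hs0.le _) hδ.le,
            ← Real.rpow_mul hs0.le,
            div_eq_mul_inv (s ^ (-δ * (p - 1))) (δ ^ (p - 1)), ← Real.rpow_neg hδ.le]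
          rw [show s ^ (-(p / N)) * (s ^ (-δ * (p - 1)) * δ ^ (-(p - 1)))
              = s ^ (-(p / N)) * s ^ (-δ * (p - 1)) * δ ^ (-(p - 1)) by ring,
            ← Real.rpow_add hs0, hexp1]
          ring
  -- integrate
  calc ∫⁻ s in Ioi (0 : ℝ), ENNReal.ofReal (s ^ (-(p / N)) * ψ s ^ p)
      ≤ ∫⁻ s in Ioi (0:ℝ),
          ENNReal.ofReal (δ ^ (-(p - 1))) * (ENNReal.ofReal (s ^ (δ - 1)) * A s) := by
        refine setLIntegral_mono ?_ pointwise
        exact (measurable_const.mul ((by fun_prop : Measurable fun s : ℝ =>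
          ENNReal.ofReal (s ^ (δ - 1))).mul hAm))
    _ = ENNReal.ofReal (δ ^ (-(p - 1))) *
          ∫⁻ s in Ioi (0:ℝ), ENNReal.ofReal (s ^ (δ - 1)) * A s :=
        lintegral_const_mul' _ _ ENNReal.ofReal_ne_top
    _ = ENNReal.ofReal (δ ^ (-(p - 1))) *
          ∫⁻ t in Ioi (0:ℝ), (∫⁻ s in Ioo 0 t, ENNReal.ofReal (s ^ (δ - 1))) * K t := by
        rw [my_tonelli K hKm (δ - 1)]
    _ = ENNReal.ofReal (δ ^ (-(p - 1))) * ∫⁻ t in Ioi (0:ℝ),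
          ENNReal.ofReal δ⁻¹ * ENNReal.ofReal (t ^ (p - p / N) * |deriv ψ t| ^ p) := by
        congr 1
        refine setLIntegral_congr_fun measurableSet_Ioi (fun t ht => ?_)
        have ht0 : (0:ℝ) < t := ht
        rw [my_lint_Ioo_rpow (by linarith) ht0, show δ - 1 + 1 = δ by ring]
        have hd : -deriv ψ t = |deriv ψ t| :=
          (abs_of_nonpos (my_deriv_nonpos hmono ht0)).symm
        rw [hK]
        simp only
        rw [hd, ENNReal.ofReal_rpow_of_nonneg (abs_nonneg _) hp0.le,
          ← ENNReal.ofReal_mul (by positivity),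
          ← ENNReal.ofReal_mul (by positivity),
          ← ENNReal.ofReal_mul (by positivity)]
        congr 1
        rw [div_eq_mul_inv]
        rw [show t ^ δ * δ⁻¹ * (|deriv ψ t| ^ p * t ^ (β * p))
            = (t ^ δ * t ^ (β * p)) * |deriv ψ t| ^ p * δ⁻¹ by ring,
          ← Real.rpow_add ht0, hexp2]
        ring
    _ = ENNReal.ofReal (δ ^ (-(p - 1))) * (ENNReal.ofReal δ⁻¹ *
          ∫⁻ t in Ioi (0:ℝ), ENNReal.ofReal (t ^ (p - p / N) * |deriv ψ t| ^ p)) := by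
        rw [lintegral_const_mul' _ _ ENNReal.ofReal_ne_top]
    _ = ENNReal.ofReal (p * (N * (p - 1) * p' / (N - p)) ^ (p - 1) * (N / (N - p))) *
          ∫⁻ s in Ioi (0 : ℝ), ENNReal.ofReal (s ^ (p - p / N) * |deriv ψ s| ^ p) := by
        rw [← mul_assoc, ← ENNReal.ofReal_mul (Real.rpow_nonneg hδ.le _)]
        congr 2
        have hbase : N * (p - 1) * p' / (N - p) = p * N / (N - p) := by
          rw [hp', show N * (p - 1) * (p / (p - 1)) = p * N by
            field_simp [sub_ne_zero.mpr hp.ne']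
            try ring]
        rw [hbase]
        have hX : (0:ℝ) < p * N / (N - p) := by positivity
        have hδinv : δ⁻¹ = p * N / (N - p) := by
          rw [hδdef, inv_div]
        rw [← Real.rpow_neg_one δ, ← Real.rpow_add hδ,
          show -(p - 1) + -1 = -p by ring, Real.rpow_neg hδ.le,
          ← Real.inv_rpow hδ.le, hδinv]
        rw [show p * (p * N / (N - p)) ^ (p - 1) * (N / (N - p))
            = (p * N / (N - p)) ^ (p - 1) * (p * N / (N - p)) by ring]
        rw [← Real.rpow_add_one (ne_of_gt hX), sub_add_cancel]
end

section
/- Let $1 < p < N$ and let $g \in L^1((1,\infty); r^{p-1}\,dr)$ be a nonnegative function, i.e. $\int_1^\infty g(r) r^{p-1}\,dr < \infty$. Then there is a constant $C = \left(\frac{p-1}{N-p}\right)^{p-1}$ such that for every compactly supported $C^1$ function $\phi$ on $\overline{B_1^c} = \{x \in \mathbb{R}^N : |x| \geq 1\}$, $\int_{B_1^c} g(|x|) |\phi(x)|^p \, dx \leq C \left( \int_1^\infty g(r) r^{p-1}\,dr \right) \int_{B_1^c} |\nabla \phi(x)|^p \, dx$. -/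
open MeasureTheory Set Metric
open scoped ENNReal

local notation "dim" => Module.finrank ℝ

lemma lintegral_polar {E : Type*} [NormedAddCommGroup E] [NormedSpace ℝ E] [MeasurableSpace E]
    [BorelSpace E] [FiniteDimensional ℝ E] [Nontrivial E] (μ : Measure E) [μ.IsAddHaarMeasure]
    (f : E → ℝ≥0∞) (hf : Measurable f) :
    ∫⁻ x, f x ∂μ = ∫⁻ ω : sphere (0:E) 1,
      ∫⁻ r in Ioi (0:ℝ), ENNReal.ofReal (r ^ (dim E - 1)) * f (r • (ω:E)) ∂volume ∂μ.toSphere := by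
  have hg : Measurable fun y : sphere (0:E) 1 × Ioi (0:ℝ) =>
      f (((homeomorphUnitSphereProd E).symm y : ({0}ᶜ : Set E)) : E) :=
    hf.comp (continuous_subtype_val.comp (homeomorphUnitSphereProd E).symm.continuous).measurable
  calc ∫⁻ x, f x ∂μ = ∫⁻ x : ({0}ᶜ : Set E), f x ∂(μ.comap (↑)) := by
        rw [lintegral_subtype_comap (measurableSet_singleton 0).compl,
          restrict_compl_singleton]
    _ = ∫⁻ y, f (((homeomorphUnitSphereProd E).symm y : ({0}ᶜ : Set E)) : E)
          ∂(μ.toSphere.prod (.volumeIoiPow (dim E - 1))) := by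
        rw [← (μ.measurePreserving_homeomorphUnitSphereProd).lintegral_comp hg]
        simp
    _ = _ := by
        rw [lintegral_prod _ hg.aemeasurable]
        refine lintegral_congr fun ω => ?_
        rw [Measure.volumeIoiPow,
          lintegral_withDensity_eq_lintegral_mul _
            (by exact (measurable_subtype_coe.pow_const _).ennreal_ofReal)
            (g := fun y : Ioi (0:ℝ) =>
              f (((homeomorphUnitSphereProd E).symm (ω, y) : ({0}ᶜ : Set E)) : E))
            (hg.comp measurable_prodMk_left)]
        rw [← lintegral_subtype_comap measurableSet_Ioi]
        refine lintegral_congr fun r => ?_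
        simp [mul_comm]

lemma integrableOn_Ioi_of_vanish {G : ℝ → ℝ} (hG : Continuous G) {R : ℝ}
    (hv : ∀ t, R ≤ t → G t = 0) (r : ℝ) : IntegrableOn G (Ioi r) := by
  have h1 : IntegrableOn G (Ioc r (max r R)) := hG.integrableOn_Ioc
  have h2 : IntegrableOn G (Ioi (max r R)) := by
    refine (integrableOn_congr_fun (f := fun _ => (0:ℝ)) ?_ measurableSet_Ioi).mp
      (integrableOn_zero)
    exact fun t ht => (hv t ((le_max_right r R).trans (le_of_lt ht))).symm
  rw [← Ioc_union_Ioi_eq_Ioi (le_max_left r R)]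
  exact h1.union h2

lemma abs_le_integral_norm_fderiv {E : Type*} [NormedAddCommGroup E] [NormedSpace ℝ E]
    (φ : E → ℝ) (hφ : ContDiff ℝ 1 φ) (hsupp : HasCompactSupport φ)
    (ω : E) (hω : ‖ω‖ = 1) {r : ℝ} (hr : 0 < r) :
    |φ (r • ω)| ≤ ∫ t in Ioi r, ‖fderiv ℝ φ (t • ω)‖ := by
  obtain ⟨R, hR⟩ := hsupp.isCompact.isBounded.subset_closedBall 0
  set G := fun t : ℝ => ‖fderiv ℝ φ (t • ω)‖ with hGdef
  have hsmul : Continuous fun t : ℝ => t • ω := continuous_id.smul continuous_const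
  have hfc : Continuous (fderiv ℝ φ) := hφ.continuous_fderiv one_ne_zero
  have hGc : Continuous G := (hfc.comp hsmul).norm
  have hnorm : ∀ t : ℝ, 0 < t → ‖t • ω‖ = t := fun t ht => by
    rw [norm_smul, hω, mul_one, Real.norm_eq_abs, abs_of_pos ht]
  have hvan : ∀ t, max 1 (R + 1) ≤ t → G t = 0 := by
    intro t ht
    have ht1 : (1:ℝ) ≤ t := (le_max_left _ _).trans ht
    have hmem : t • ω ∉ tsupport φ := by
      intro hmem
      have := hR hmem
      rw [mem_closedBall_zero_iff, hnorm t (by linarith)] at this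
      have : R + 1 ≤ t := (le_max_right _ _).trans ht
      linarith
    simp only [hGdef]
    rw [image_eq_zero_of_notMem_tsupport (fun h => hmem (tsupport_fderiv_subset ℝ h)),
      norm_zero]
  have hGint : IntegrableOn G (Ioi r) := integrableOn_Ioi_of_vanish hGc hvan r
  set M := max (r + 1) (max 1 (R + 1)) with hM
  have hrM : r ≤ M := by have := le_max_left (r+1) (max 1 (R+1)); linarith
  have hφM : φ (M • ω) = 0 := by
    have hM1 : (1:ℝ) ≤ M := le_trans (le_max_left 1 (R+1)) (le_max_right _ _)
    have : M • ω ∉ tsupport φ := by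
      intro hmem
      have := hR hmem
      rw [mem_closedBall_zero_iff, hnorm M (by linarith)] at this
      have : R + 1 ≤ M := le_trans (le_max_right 1 (R+1)) (le_max_right _ _)
      linarith
    exact image_eq_zero_of_notMem_tsupport this
  have key : ∀ t : ℝ, HasDerivAt (fun s => φ (s • ω)) ((fderiv ℝ φ (t • ω)) ω) t := by
    intro t
    have h1 : HasFDerivAt φ (fderiv ℝ φ (t • ω)) (t • ω) :=
      (hφ.differentiable one_ne_zero (t • ω)).hasFDerivAt
    have h2 : HasDerivAt (fun s : ℝ => s • ω) ω t := by
      simpa using (hasDerivAt_id t).smul_const ω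
    exact h1.comp_hasDerivAt t h2
  have hdc : Continuous fun t : ℝ => (fderiv ℝ φ (t • ω)) ω :=
    (hfc.comp hsmul).clm_apply continuous_const
  have hint : ∫ t in r..M, (fderiv ℝ φ (t • ω)) ω = φ (M • ω) - φ (r • ω) :=
    intervalIntegral.integral_eq_sub_of_hasDerivAt (fun t _ => key t)
      (hdc.intervalIntegrable r M)
  rw [hφM, zero_sub] at hint
  have h1 : |φ (r • ω)| = |∫ t in r..M, (fderiv ℝ φ (t • ω)) ω| := by
    rw [hint, abs_neg]
  rw [h1]
  calc |∫ t in r..M, (fderiv ℝ φ (t • ω)) ω| ≤ ∫ t in r..M, |(fderiv ℝ φ (t • ω)) ω| :=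
        intervalIntegral.abs_integral_le_integral_abs hrM
    _ ≤ ∫ t in r..M, G t := by
        refine intervalIntegral.integral_mono_on hrM
          (hdc.abs.intervalIntegrable r M) (hGc.intervalIntegrable r M) fun t _ => ?_
        calc |(fderiv ℝ φ (t • ω)) ω| = ‖(fderiv ℝ φ (t • ω)) ω‖ := rfl
          _ ≤ ‖fderiv ℝ φ (t • ω)‖ * ‖ω‖ := ContinuousLinearMap.le_opNorm _ _
          _ = G t := by rw [hω, mul_one]
    _ = ∫ t in Ioc r M, G t := intervalIntegral.integral_of_le hrM
    _ ≤ ∫ t in Ioi r, G t := by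
        refine setIntegral_mono_set hGint ?_ (HasSubset.Subset.eventuallyLE Ioc_subset_Ioi_self)
        exact Filter.Eventually.of_forall fun t => norm_nonneg _

lemma pointwise_radial_bound {E : Type*} [NormedAddCommGroup E] [NormedSpace ℝ E]
    (N : ℕ) (p : ℝ) (hp : 1 < p) (hpN : p < N)
    (φ : E → ℝ) (hφ : ContDiff ℝ 1 φ) (hsupp : HasCompactSupport φ)
    (ω : E) (hω : ‖ω‖ = 1) {r : ℝ} (hr : 1 < r) :
    ENNReal.ofReal (|φ (r • ω)| ^ p) ≤
      ENNReal.ofReal (((p - 1) / ((N:ℝ) - p)) ^ (p - 1) * r ^ (p - (N:ℝ))) *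
        ∫⁻ t in Ioi r, ENNReal.ofReal (t ^ ((N:ℝ) - 1) * ‖fderiv ℝ φ (t • ω)‖ ^ p) := by
  have hr0 : (0:ℝ) < r := zero_lt_one.trans hr
  have hp0 : (0:ℝ) < p := zero_lt_one.trans hp
  have hp1 : (0:ℝ) < p - 1 := by linarith
  have hNp : (0:ℝ) < (N:ℝ) - p := by linarith
  have hN1 : (1:ℝ) < (N:ℝ) := lt_trans hp hpN
  set G := fun t : ℝ => ‖fderiv ℝ φ (t • ω)‖ with hGdef
  have hsmul : Continuous fun t : ℝ => t • ω := continuous_id.smul continuous_const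
  have hfc : Continuous (fderiv ℝ φ) := hφ.continuous_fderiv one_ne_zero
  have hGc : Continuous G := (hfc.comp hsmul).norm
  -- vanishing of G at infinity
  obtain ⟨R, hR⟩ := hsupp.isCompact.isBounded.subset_closedBall 0
  have hvan : ∀ t, max 1 (R + 1) ≤ t → G t = 0 := by
    intro t ht
    have ht1 : (1:ℝ) ≤ t := (le_max_left _ _).trans ht
    have hmem : t • ω ∉ tsupport φ := by
      intro hmem
      have h2 := hR hmem
      rw [mem_closedBall_zero_iff, norm_smul, hω, mul_one, Real.norm_eq_abs,
        abs_of_pos (by linarith)] at h2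
      have : R + 1 ≤ t := (le_max_right _ _).trans ht
      linarith
    simp only [hGdef]
    rw [image_eq_zero_of_notMem_tsupport (fun h => hmem (tsupport_fderiv_subset ℝ h)), norm_zero]
  have hGint : IntegrableOn G (Ioi r) := integrableOn_Ioi_of_vanish hGc hvan r
  have hGnn : ∀ t, 0 ≤ G t := fun t => norm_nonneg _
  set q := p / (p - 1) with hq
  have hpq : p.HolderConjugate q := (Real.holderConjugate_iff_eq_conjExponent hp).2 hq
  set a := ((N:ℝ) - 1) / p with ha
  set C2 : ℝ := (p - 1) / ((N:ℝ) - p) * r ^ ((p - (N:ℝ)) / (p - 1)) with hC2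
  have hC2nn : 0 ≤ C2 := by positivity
  set F1 := fun t : ℝ => ENNReal.ofReal (t ^ a * G t) with hF1
  set F2 := fun t : ℝ => ENNReal.ofReal (t ^ (-a)) with hF2
  have hF1m : Measurable F1 :=
    ((measurable_id.pow_const a).mul hGc.measurable).ennreal_ofReal
  have hF2m : Measurable F2 := (measurable_id.pow_const (-a)).ennreal_ofReal
  -- Hölder
  have holder := ENNReal.lintegral_mul_le_Lp_mul_Lq (volume.restrict (Ioi r)) hpq
    hF1m.aemeasurable hF2m.aemeasurable
  -- rewrite LHS of holder
  have hlhs : (∫⁻ t in Ioi r, (F1 * F2) t) = ∫⁻ t in Ioi r, ENNReal.ofReal (G t) := by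
    refine setLIntegral_congr_fun measurableSet_Ioi (fun t ht => ?_)
    have ht0 : (0:ℝ) < t := hr0.trans ht
    simp only [hF1, hF2, Pi.mul_apply]
    rw [← ENNReal.ofReal_mul (by positivity), mul_right_comm,
      ← Real.rpow_add ht0, add_neg_cancel, Real.rpow_zero, one_mul]
  -- rewrite f1 p-norm
  have hf1p : (∫⁻ t in Ioi r, F1 t ^ p) =
      ∫⁻ t in Ioi r, ENNReal.ofReal (t ^ ((N:ℝ) - 1) * G t ^ p) := by
    refine setLIntegral_congr_fun measurableSet_Ioi (fun t ht => ?_)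
    have ht0 : (0:ℝ) < t := hr0.trans ht
    simp only [hF1]
    rw [ENNReal.ofReal_rpow_of_nonneg (by positivity) hp0.le,
      Real.mul_rpow (by positivity) (hGnn t), ← Real.rpow_mul ht0.le]
    have hap : a * p = (N:ℝ) - 1 := by rw [ha]; field_simp
    rw [hap]
  -- compute f2 q-norm
  have hf2q : (∫⁻ t in Ioi r, F2 t ^ q) = ENNReal.ofReal C2 := by
    have hb : -a * q = -(((N:ℝ) - 1) / (p - 1)) := by
      simp only [ha, hq]; field_simp; try ring
    have hblt : -(((N:ℝ) - 1) / (p - 1)) < -1 := by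
      rw [neg_lt_neg_iff, lt_div_iff₀ hp1]
      linarith
    have hpt : ∀ t ∈ Ioi r, F2 t ^ q = ENNReal.ofReal (t ^ (-(((N:ℝ) - 1) / (p - 1)))) := by
      intro t ht
      have ht0 : (0:ℝ) < t := hr0.trans ht
      simp only [hF2]
      rw [ENNReal.ofReal_rpow_of_nonneg (by positivity) hpq.symm.pos.le,
        ← Real.rpow_mul ht0.le, hb]
    rw [setLIntegral_congr_fun measurableSet_Ioi hpt,
      ← ofReal_integral_eq_lintegral_ofReal
        (integrableOn_Ioi_rpow_of_lt hblt hr0)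
        (by filter_upwards [ae_restrict_mem measurableSet_Ioi] with t ht;
            have : (0:ℝ) < t := hr0.trans ht; positivity),
      integral_Ioi_rpow_of_lt hblt hr0]
    congr 1
    have he : -(((N:ℝ) - 1) / (p - 1)) + 1 = (p - (N:ℝ)) / (p - 1) := by field_simp; try ring
    rw [he, hC2]
    generalize r ^ ((p - (N:ℝ)) / (p - 1)) = X
    field_simp [hp1.ne', hNp.ne', sub_ne_zero.mpr (ne_of_lt hpN)]
    try ring
  -- combine
  set A := ∫⁻ t in Ioi r, ENNReal.ofReal (t ^ ((N:ℝ) - 1) * G t ^ p) with hA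
  have step1 : ENNReal.ofReal |φ (r • ω)| ≤ ∫⁻ t in Ioi r, ENNReal.ofReal (G t) := by
    rw [← ofReal_integral_eq_lintegral_ofReal hGint
      (Filter.Eventually.of_forall fun t => hGnn t)]
    exact ENNReal.ofReal_le_ofReal (abs_le_integral_norm_fderiv φ hφ hsupp ω hω hr0)
  have step2 : ENNReal.ofReal |φ (r • ω)| ≤ A ^ (1/p) * (ENNReal.ofReal C2) ^ (1/q) := by
    refine step1.trans ?_
    rw [← hlhs]
    refine holder.trans ?_
    rw [hf1p, hf2q]
  have h1q : 1/q * p = p - 1 := by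
    rw [mul_comm, mul_one_div, hpq.div_conj_eq_sub_one]
  calc ENNReal.ofReal (|φ (r • ω)| ^ p) = (ENNReal.ofReal |φ (r • ω)|) ^ p :=
        (ENNReal.ofReal_rpow_of_nonneg (abs_nonneg _) hp0.le).symm
    _ ≤ (A ^ (1/p) * (ENNReal.ofReal C2) ^ (1/q)) ^ p := ENNReal.rpow_le_rpow step2 hp0.le
    _ = A ^ (1/p * p) * (ENNReal.ofReal C2) ^ (1/q * p) := by
        rw [ENNReal.mul_rpow_of_nonneg _ _ hp0.le, ← ENNReal.rpow_mul, ← ENNReal.rpow_mul]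
    _ = A * (ENNReal.ofReal C2) ^ (p - 1) := by
        rw [one_div, inv_mul_cancel₀ hp0.ne', ENNReal.rpow_one, h1q]
    _ = ENNReal.ofReal (((p - 1) / ((N:ℝ) - p)) ^ (p - 1) * r ^ (p - (N:ℝ))) * A := by
        rw [ENNReal.ofReal_rpow_of_nonneg hC2nn hp1.le, mul_comm]
        congr 2
        rw [hC2, Real.mul_rpow (by positivity) (by positivity), ← Real.rpow_mul hr0.le,
          div_mul_cancel₀ _ hp1.ne']

theorem weighted_hardy_exterior_subcritical (N : ℕ) (p : ℝ) (hp : 1 < p) (hpN : p < N)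
    (g : ℝ → ℝ) (hg0 : ∀ r, 1 < r → 0 ≤ g r)
    (hgmeas : Measurable g)
    (hgint : IntegrableOn (fun r => g r * r ^ (p - 1)) (Ioi 1))
    (φ : EuclideanSpace ℝ (Fin N) → ℝ)
    (hφ : ContDiff ℝ 1 φ) (hsupp : HasCompactSupport φ) :
    ∫⁻ x in {x : EuclideanSpace ℝ (Fin N) | 1 < ‖x‖},
        ENNReal.ofReal (g ‖x‖ * |φ x| ^ p) ≤
      ENNReal.ofReal (((p - 1) / (N - p)) ^ (p - 1) *
          (∫ r in Ioi (1 : ℝ), g r * r ^ (p - 1)) *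
        ∫ x in {x : EuclideanSpace ℝ (Fin N) | 1 < ‖x‖}, ‖fderiv ℝ φ x‖ ^ p) := by
  have hp0 : (0:ℝ) < p := zero_lt_one.trans hp
  have hp1 : (0:ℝ) < p - 1 := by linarith
  have hNp : (0:ℝ) < (N:ℝ) - p := by linarith
  have hN1 : 1 ≤ N := by
    by_contra h
    push_neg at h
    interval_cases N <;> simp_all <;> linarith
  haveI : Nontrivial (EuclideanSpace ℝ (Fin N)) := by
    apply Module.nontrivial_of_finrank_pos (R := ℝ)
    rw [finrank_euclideanSpace]
    simp; omega
  have hdim : Module.finrank ℝ (EuclideanSpace ℝ (Fin N)) = N := by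
    rw [finrank_euclideanSpace]; simp
  set S : Set (EuclideanSpace ℝ (Fin N)) := {x | 1 < ‖x‖} with hS
  have hSm : MeasurableSet S := (isOpen_lt continuous_const continuous_norm).measurableSet
  set C : ℝ := ((p - 1) / ((N:ℝ) - p)) ^ (p - 1) with hC
  have hCnn : 0 ≤ C := by positivity
  set f' := fderiv ℝ φ with hf'
  have hfc : Continuous f' := hφ.continuous_fderiv one_ne_zero
  have hφc : Continuous φ := hφ.continuous
  -- npow/rpow conversion
  have hpow : ∀ t : ℝ, 0 < t → (t ^ (N - 1 : ℕ)) = t ^ ((N:ℝ) - 1) := by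
    intro t ht
    rw [← Real.rpow_natCast t (N - 1), Nat.cast_sub hN1, Nat.cast_one]
  -- measurable integrands
  have hFm : Measurable fun x : EuclideanSpace ℝ (Fin N) =>
      ENNReal.ofReal (g ‖x‖ * |φ x| ^ p) := by
    apply Measurable.ennreal_ofReal
    exact (hgmeas.comp measurable_norm).mul (hφc.abs.measurable.pow_const p)
  have hGm : Measurable fun x : EuclideanSpace ℝ (Fin N) =>
      ENNReal.ofReal (‖f' x‖ ^ p) := (hfc.norm.measurable.pow_const p).ennreal_ofReal
  -- the derivative-side lintegral as a real integral
  have hJc : Continuous fun x : EuclideanSpace ℝ (Fin N) => ‖f' x‖ ^ p :=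
    hfc.norm.rpow_const fun x => Or.inr hp0.le
  have hJsupp : HasCompactSupport fun x : EuclideanSpace ℝ (Fin N) => ‖f' x‖ ^ p := by
    refine (hsupp.fderiv ℝ).comp_left (g := fun u => ‖u‖ ^ p) ?_
    simp [Real.zero_rpow hp0.ne']
  have hJint : IntegrableOn (fun x => ‖f' x‖ ^ p) S :=
    (hJc.integrable_of_hasCompactSupport hJsupp).integrableOn
  have hJnn : 0 ≤ ∫ x in S, ‖f' x‖ ^ p :=
    setIntegral_nonneg hSm fun x _ => Real.rpow_nonneg (norm_nonneg _) p
  have hJ : (∫⁻ x in S, ENNReal.ofReal (‖f' x‖ ^ p)) =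
      ENNReal.ofReal (∫ x in S, ‖f' x‖ ^ p) :=
    (ofReal_integral_eq_lintegral_ofReal hJint
      (Filter.Eventually.of_forall fun x => Real.rpow_nonneg (norm_nonneg _) p)).symm
  -- g-side lintegral
  have hInn : 0 ≤ ∫ r in Ioi (1:ℝ), g r * r ^ (p - 1) := by
    refine setIntegral_nonneg measurableSet_Ioi fun r hr => ?_
    have : (0:ℝ) < r := zero_lt_one.trans hr
    exact mul_nonneg (hg0 r hr) (by positivity)
  have hI : (∫⁻ r in Ioi (1:ℝ), ENNReal.ofReal (g r * r ^ (p - 1))) =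
      ENNReal.ofReal (∫ r in Ioi (1:ℝ), g r * r ^ (p - 1)) := by
    refine (ofReal_integral_eq_lintegral_ofReal hgint ?_).symm
    filter_upwards [ae_restrict_mem measurableSet_Ioi] with r hr
    have : (0:ℝ) < r := zero_lt_one.trans hr
    exact mul_nonneg (hg0 r hr) (by positivity)
  -- polar reduction for integrals over S
  have polar_restrict : ∀ Φ : EuclideanSpace ℝ (Fin N) → ℝ≥0∞, Measurable Φ →
      ∫⁻ x in S, Φ x = ∫⁻ ω : sphere (0 : EuclideanSpace ℝ (Fin N)) 1,
        ∫⁻ r in Ioi (1:ℝ), ENNReal.ofReal (r ^ (N - 1 : ℕ)) * Φ (r • (ω : EuclideanSpace ℝ (Fin N)))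
          ∂volume ∂(volume : Measure (EuclideanSpace ℝ (Fin N))).toSphere := by
    intro Φ hΦ
    rw [← lintegral_indicator hSm]
    rw [lintegral_polar volume _ (hΦ.indicator hSm), hdim]
    refine lintegral_congr fun ω => ?_
    have hω : ‖(ω : EuclideanSpace ℝ (Fin N))‖ = 1 := mem_sphere_zero_iff_norm.mp ω.2
    have hind : ∀ r ∈ Ioi (0:ℝ),
        ENNReal.ofReal (r ^ (N - 1 : ℕ)) * S.indicator Φ (r • (ω : EuclideanSpace ℝ (Fin N))) =
        (Ioi (1:ℝ)).indicator
          (fun r => ENNReal.ofReal (r ^ (N - 1 : ℕ)) * Φ (r • (ω : EuclideanSpace ℝ (Fin N)))) r := by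
      intro r hr
      have hnorm : ‖r • (ω : EuclideanSpace ℝ (Fin N))‖ = r := by
        rw [norm_smul, hω, mul_one, Real.norm_eq_abs, abs_of_pos hr]
      by_cases h1 : 1 < r
      · rw [indicator_of_mem (mem_Ioi.mpr h1), indicator_of_mem]
        show 1 < ‖r • (ω : EuclideanSpace ℝ (Fin N))‖
        rw [hnorm]; exact h1
      · rw [indicator_of_notMem (fun h => h1 (mem_Ioi.mp h)), indicator_of_notMem, mul_zero]
        show ¬ 1 < ‖r • (ω : EuclideanSpace ℝ (Fin N))‖
        rw [hnorm]; exact h1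
    rw [setLIntegral_congr_fun measurableSet_Ioi hind,
      lintegral_indicator measurableSet_Ioi, Measure.restrict_restrict measurableSet_Ioi,
      Ioi_inter_Ioi]
    norm_num
  -- notation for inner quantities
  set I' : ℝ≥0∞ := ∫⁻ r in Ioi (1:ℝ), ENNReal.ofReal (g r * r ^ (p - 1)) with hI'
  set A : sphere (0 : EuclideanSpace ℝ (Fin N)) 1 → ℝ≥0∞ := fun ω =>
    ∫⁻ t in Ioi (1:ℝ),
      ENNReal.ofReal (t ^ ((N:ℝ) - 1) * ‖f' (t • (ω : EuclideanSpace ℝ (Fin N)))‖ ^ p) with hA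
  have hInt_ne : ENNReal.ofReal C * I' ≠ ⊤ := by
    rw [hI]
    exact ENNReal.mul_ne_top ENNReal.ofReal_ne_top ENNReal.ofReal_ne_top
  -- inner bound for each direction ω
  have inner_bound : ∀ ω : sphere (0 : EuclideanSpace ℝ (Fin N)) 1,
      (∫⁻ r in Ioi (1:ℝ), ENNReal.ofReal (r ^ (N - 1 : ℕ)) *
        ENNReal.ofReal (g ‖r • (ω : EuclideanSpace ℝ (Fin N))‖ *
          |φ (r • (ω : EuclideanSpace ℝ (Fin N)))| ^ p)) ≤
      ENNReal.ofReal C * I' * A ω := by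
    intro ω
    have hω : ‖(ω : EuclideanSpace ℝ (Fin N))‖ = 1 := mem_sphere_zero_iff_norm.mp ω.2
    calc (∫⁻ r in Ioi (1:ℝ), ENNReal.ofReal (r ^ (N - 1 : ℕ)) *
          ENNReal.ofReal (g ‖r • (ω : EuclideanSpace ℝ (Fin N))‖ *
            |φ (r • (ω : EuclideanSpace ℝ (Fin N)))| ^ p)) ≤
        ∫⁻ r in Ioi (1:ℝ),
          ENNReal.ofReal C * ENNReal.ofReal (g r * r ^ (p - 1)) * A ω := by
          refine lintegral_mono_ae ?_
          filter_upwards [ae_restrict_mem measurableSet_Ioi] with r hr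
          have hr0 : (0:ℝ) < r := zero_lt_one.trans hr
          have hnorm : ‖r • (ω : EuclideanSpace ℝ (Fin N))‖ = r := by
            rw [norm_smul, hω, mul_one, Real.norm_eq_abs, abs_of_pos hr0]
          rw [hnorm]
          have hgr : 0 ≤ g r := hg0 r hr
          have hsplit : ENNReal.ofReal (g r * |φ (r • (ω : EuclideanSpace ℝ (Fin N)))| ^ p) =
              ENNReal.ofReal (g r) *
                ENNReal.ofReal (|φ (r • (ω : EuclideanSpace ℝ (Fin N)))| ^ p) :=
            ENNReal.ofReal_mul hgr
          rw [hsplit, ← mul_assoc, ← ENNReal.ofReal_mul (by positivity)]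
          have hkey := pointwise_radial_bound N p hp hpN φ hφ hsupp
            (ω : EuclideanSpace ℝ (Fin N)) hω hr
          have hmono : (∫⁻ t in Ioi r,
              ENNReal.ofReal (t ^ ((N:ℝ) - 1) * ‖f' (t • (ω : EuclideanSpace ℝ (Fin N)))‖ ^ p)) ≤
              A ω := lintegral_mono_set (Ioi_subset_Ioi hr.le)
          calc ENNReal.ofReal (r ^ (N - 1 : ℕ) * g r) *
                ENNReal.ofReal (|φ (r • (ω : EuclideanSpace ℝ (Fin N)))| ^ p) ≤
              ENNReal.ofReal (r ^ (N - 1 : ℕ) * g r) *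
                (ENNReal.ofReal (((p - 1) / ((N:ℝ) - p)) ^ (p - 1) * r ^ (p - (N:ℝ))) * A ω) := by
                exact mul_le_mul_right (hkey.trans (mul_le_mul_right hmono _)) _
            _ = ENNReal.ofReal C * ENNReal.ofReal (g r * r ^ (p - 1)) * A ω := by
                rw [← mul_assoc, ← ENNReal.ofReal_mul (by positivity)]
                congr 2
                rw [hpow r hr0, hC]
                rw [show r ^ ((N:ℝ) - 1) * g r * (((p - 1) / ((N:ℝ) - p)) ^ (p - 1) *
                    r ^ (p - (N:ℝ))) = ((p - 1) / ((N:ℝ) - p)) ^ (p - 1) *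
                    (g r * (r ^ ((N:ℝ) - 1) * r ^ (p - (N:ℝ)))) by ring,
                  ← Real.rpow_add hr0]
                rw [show (N:ℝ) - 1 + (p - (N:ℝ)) = p - 1 by ring]
                exact ENNReal.ofReal_mul (by positivity)
      _ = ENNReal.ofReal C * I' * A ω := by
          rw [lintegral_mul_const _ (f := fun r : ℝ => ENNReal.ofReal C * ENNReal.ofReal (g r * r ^ (p - 1))) (((hgmeas.mul (measurable_id'.pow_const (p-1))).ennreal_ofReal).const_mul _),
            lintegral_const_mul' _ _ ENNReal.ofReal_ne_top]
  -- derivative side via polar coordinates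
  have hAeq : (∫⁻ ω, A ω ∂(volume : Measure (EuclideanSpace ℝ (Fin N))).toSphere) =
      ∫⁻ x in S, ENNReal.ofReal (‖f' x‖ ^ p) := by
    rw [polar_restrict _ hGm]
    refine lintegral_congr fun ω => ?_
    refine setLIntegral_congr_fun measurableSet_Ioi (fun t ht => ?_)
    have ht0 : (0:ℝ) < t := zero_lt_one.trans ht
    rw [hpow t ht0, ENNReal.ofReal_mul (by positivity)]
  -- put everything together
  calc ∫⁻ x in S, ENNReal.ofReal (g ‖x‖ * |φ x| ^ p) =
      ∫⁻ ω : sphere (0 : EuclideanSpace ℝ (Fin N)) 1, ∫⁻ r in Ioi (1:ℝ),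
        ENNReal.ofReal (r ^ (N - 1 : ℕ)) *
          ENNReal.ofReal (g ‖r • (ω : EuclideanSpace ℝ (Fin N))‖ *
            |φ (r • (ω : EuclideanSpace ℝ (Fin N)))| ^ p)
        ∂volume ∂(volume : Measure (EuclideanSpace ℝ (Fin N))).toSphere :=
        polar_restrict _ hFm
    _ ≤ ∫⁻ ω : sphere (0 : EuclideanSpace ℝ (Fin N)) 1, ENNReal.ofReal C * I' * A ω
          ∂(volume : Measure (EuclideanSpace ℝ (Fin N))).toSphere :=
        lintegral_mono inner_bound
    _ = ENNReal.ofReal C * I' * ∫⁻ ω, A ω ∂(volume : Measure (EuclideanSpace ℝ (Fin N))).toSphere :=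
        lintegral_const_mul' _ _ hInt_ne
    _ = ENNReal.ofReal (C * (∫ r in Ioi (1:ℝ), g r * r ^ (p - 1)) * ∫ x in S, ‖f' x‖ ^ p) := by
        rw [hAeq, hJ, hI, ← ENNReal.ofReal_mul hCnn,
          ← ENNReal.ofReal_mul (mul_nonneg hCnn hInn)]
end

section
/- Let $N \geq 2$, $p = N$, and let $g : (1,\infty) \to [0,\infty)$ satisfy $\int_1^\infty g(r) (r(1+\log r))^{N-1}\,dr < \infty$. Then there exists a constant $C = C(N) > 0$ such that for every $\phi \in W^{1,N}(B_1^c)$, $\int_{B_1^c} g(|x|) |\phi(x)|^N \, dx \leq C \left( \int_1^\infty g(r)(r(1+\log r))^{N-1}\,dr \right) \|\phi\|_{W^{1,N}(B_1^c)}^N$. -/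
open MeasureTheory Set

noncomputable section WeightedEmbeddingAux

open Metric ENNReal

variable {N : ℕ}

local notation "E" => EuclideanSpace ℝ (Fin N)

lemma holder_ray (n : ℕ) (hn : 2 ≤ n) {r : ℝ} (hr : 1 < r) (u : ℝ → ℝ≥0∞)
    (hu : Measurable u) :
    (∫⁻ t in Ioo 1 r, u t) ^ n ≤
      ENNReal.ofReal (Real.log r) ^ (n - 1) *
        ∫⁻ t in Ioo 1 r, ENNReal.ofReal t ^ (n - 1) * u t ^ n := by
  have hn2 : (2:ℝ) ≤ (n:ℝ) := by exact_mod_cast hn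
  have hnpos : (0:ℝ) < n := by linarith
  have hn1pos : (0:ℝ) < (n:ℝ) - 1 := by linarith
  set p : ℝ := (n:ℝ) / ((n:ℝ) - 1) with hp
  set q : ℝ := (n:ℝ) with hq
  have hpq : p.HolderConjugate q := by
    rw [Real.holderConjugate_iff]
    constructor
    · rw [hp]
      rw [lt_div_iff₀ hn1pos]
      linarith
    · rw [hp, hq]
      field_simp
      ring
  set f₁ : ℝ → ℝ≥0∞ := fun t => (ENNReal.ofReal t) ^ (-(((n:ℝ) - 1) / n)) with hf₁
  set f₂ : ℝ → ℝ≥0∞ := fun t => (ENNReal.ofReal t) ^ (((n:ℝ) - 1) / n) * u t with hf₂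
  have hf₁m : Measurable f₁ := (measurable_id.ennreal_ofReal).pow_const _
  have hf₂m : Measurable f₂ := ((measurable_id.ennreal_ofReal).pow_const _).mul hu
  have key := ENNReal.lintegral_mul_le_Lp_mul_Lq (volume.restrict (Ioo 1 r)) hpq
    hf₁m.aemeasurable hf₂m.aemeasurable
  -- f₁ * f₂ = u on Ioo 1 r
  have hmul : ∫⁻ t in Ioo 1 r, (f₁ * f₂) t = ∫⁻ t in Ioo 1 r, u t := by
    apply setLIntegral_congr_fun measurableSet_Ioo
    intro t ht
    have ht0 : (0:ℝ) < t := lt_trans one_pos ht.1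
    have hne0 : ENNReal.ofReal t ≠ 0 := (ENNReal.ofReal_pos.2 ht0).ne'
    have hnetop : ENNReal.ofReal t ≠ ⊤ := ENNReal.ofReal_ne_top
    simp only [Pi.mul_apply, hf₁, hf₂]
    rw [← mul_assoc, ← ENNReal.rpow_add _ _ hne0 hnetop]
    norm_num
  -- ∫ f₁ ^ p = ofReal (log r)
  have hint1 : ∫⁻ t in Ioo 1 r, f₁ t ^ p = ENNReal.ofReal (Real.log r) := by
    have hcong : ∫⁻ t in Ioo 1 r, f₁ t ^ p = ∫⁻ t in Ioo 1 r, ENNReal.ofReal t⁻¹ := by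
      apply setLIntegral_congr_fun measurableSet_Ioo
      intro t ht
      have ht0 : (0:ℝ) < t := lt_trans one_pos ht.1
      simp only [hf₁]
      rw [← ENNReal.rpow_mul]
      have hexp : (-(((n:ℝ) - 1) / n)) * p = -1 := by
        rw [hp]; field_simp
        rw [hq]; ring
      rw [hexp, ENNReal.rpow_neg_one, ← ENNReal.ofReal_inv_of_pos ht0]
    rw [hcong]
    rw [← ofReal_integral_eq_lintegral_ofReal]
    · congr 1
      rw [setIntegral_congr_set Ioo_ae_eq_Ioc, ← intervalIntegral.integral_of_le hr.le,
        integral_inv_of_pos one_pos (lt_trans one_pos hr)]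
      simp
    · have : IntervalIntegrable (fun x : ℝ => x⁻¹) volume 1 r :=
        intervalIntegral.intervalIntegrable_inv (fun x hx => by
          rcases hx with ⟨h1, h2⟩
          have : (1:ℝ) ≤ x := by
            simpa [inf_eq_left.2 hr.le] using h1
          linarith) continuousOn_id
      exact this.1.mono_set Ioo_subset_Ioc_self
    · filter_upwards [ae_restrict_mem measurableSet_Ioo] with t ht
      have : (0:ℝ) < t := lt_trans one_pos ht.1
      positivity
  have hcast : ((n - 1 : ℕ) : ℝ) = (n:ℝ) - 1 := by
    rw [Nat.cast_sub (by omega), Nat.cast_one]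
  have hint2 : ∫⁻ t in Ioo 1 r, f₂ t ^ q
      = ∫⁻ t in Ioo 1 r, ENNReal.ofReal t ^ (n - 1) * u t ^ n := by
    apply setLIntegral_congr_fun measurableSet_Ioo
    intro t ht
    simp only [hf₂]
    rw [ENNReal.mul_rpow_of_nonneg _ _ (by positivity), ← ENNReal.rpow_mul]
    have hexp : (((n:ℝ) - 1) / n) * q = (n:ℝ) - 1 := by
      rw [hq]; field_simp
    rw [hexp, ← hcast, ENNReal.rpow_natCast, hq, ENNReal.rpow_natCast]
  rw [hmul, hint1, hint2] at key
  calc (∫⁻ t in Ioo 1 r, u t) ^ n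
      = (∫⁻ t in Ioo 1 r, u t) ^ (q : ℝ) := by
        rw [hq, ENNReal.rpow_natCast]
    _ ≤ ((ENNReal.ofReal (Real.log r)) ^ (1/p) *
          (∫⁻ t in Ioo 1 r, ENNReal.ofReal t ^ (n - 1) * u t ^ n) ^ (1/q)) ^ (q : ℝ) :=
        ENNReal.rpow_le_rpow key (by positivity)
    _ = (ENNReal.ofReal (Real.log r)) ^ ((1/p) * q) *
          (∫⁻ t in Ioo 1 r, ENNReal.ofReal t ^ (n - 1) * u t ^ n) ^ ((1/q) * q) := by
        rw [ENNReal.mul_rpow_of_nonneg _ _ (by positivity), ← ENNReal.rpow_mul,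
          ← ENNReal.rpow_mul]
    _ = ENNReal.ofReal (Real.log r) ^ (n - 1) *
          ∫⁻ t in Ioo 1 r, ENNReal.ofReal t ^ (n - 1) * u t ^ n := by
        have h1 : (1/p) * q = (n:ℝ) - 1 := by
          rw [hp, hq]; field_simp
        have h2 : (1/q) * q = 1 := by
          rw [hq]; field_simp
        rw [h1, h2, ENNReal.rpow_one, ← hcast, ENNReal.rpow_natCast]

lemma polar_lintegral (f : EuclideanSpace ℝ (Fin N) → ℝ≥0∞) (hf : Measurable f) :
    ∫⁻ x in {x : EuclideanSpace ℝ (Fin N) | 1 < ‖x‖}, f x =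
      ∫⁻ ω : sphere (0 : EuclideanSpace ℝ (Fin N)) 1, ∫⁻ r in Ioi (1:ℝ),
        ENNReal.ofReal (r ^ (N-1)) * f (r • (ω : EuclideanSpace ℝ (Fin N)))
        ∂(volume : Measure ℝ) ∂((volume : Measure (EuclideanSpace ℝ (Fin N))).toSphere) := by
  have hS : MeasurableSet {x : E | 1 < ‖x‖} :=
    measurableSet_lt measurable_const measurable_norm
  have hfi : Measurable ({x : E | 1 < ‖x‖}.indicator f) := hf.indicator hS
  have h0 : MeasurableSet ({(0 : E)}ᶜ) := (measurableSet_singleton _).compl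
  have hsub : {x : E | 1 < ‖x‖} ∩ {(0:E)}ᶜ = {x : E | 1 < ‖x‖} := by
    apply inter_eq_self_of_subset_left
    intro x hx
    simp only [mem_compl_iff, mem_singleton_iff]
    intro h
    simp [h] at hx
    exact lt_irrefl _ (hx.trans zero_lt_one) |>.elim
  have hfinrank : Module.finrank ℝ (EuclideanSpace ℝ (Fin N)) = N := finrank_euclideanSpace_fin
  -- step 1: restrict to complement of 0
  have step1 : ∫⁻ x in {x : E | 1 < ‖x‖}, f x
      = ∫⁻ x in ({(0:E)}ᶜ), ({x : E | 1 < ‖x‖}.indicator f) x := by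
    rw [lintegral_indicator hS, Measure.restrict_restrict hS, hsub]
  -- step 2: to the subtype
  have step2 : ∫⁻ x in ({(0:E)}ᶜ), ({x : E | 1 < ‖x‖}.indicator f) x
      = ∫⁻ y : ({(0:E)}ᶜ : Set _), ({x : E | 1 < ‖x‖}.indicator f) y
          ∂((volume : Measure (EuclideanSpace ℝ (Fin N))).comap Subtype.val) := by
    rw [lintegral_subtype_comap h0]
  -- step 3: measure preserving polar map
  set g : sphere (0 : E) 1 × Ioi (0:ℝ) → ℝ≥0∞ :=
    fun p => ({x : E | 1 < ‖x‖}.indicator f) ((p.2 : ℝ) • (p.1 : E)) with hg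
  have hgmeas : Measurable g := by
    apply hfi.comp
    exact ((measurable_subtype_coe.comp measurable_snd).smul
      (measurable_subtype_coe.comp measurable_fst))
  have step3 : ∫⁻ y : ({(0:E)}ᶜ : Set _), ({x : E | 1 < ‖x‖}.indicator f) y
          ∂((volume : Measure (EuclideanSpace ℝ (Fin N))).comap Subtype.val)
      = ∫⁻ p : sphere (0 : E) 1 × Ioi (0:ℝ), g p
          ∂((volume : Measure (EuclideanSpace ℝ (Fin N))).toSphere.prod
            (.volumeIoiPow (Module.finrank ℝ (EuclideanSpace ℝ (Fin N)) - 1))) := by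
    rw [← (Measure.measurePreserving_homeomorphUnitSphereProd
      (volume : Measure (EuclideanSpace ℝ (Fin N)))).lintegral_comp hgmeas]
    apply lintegral_congr
    intro y
    simp only [hg]
    congr 1
    symm
    have := (homeomorphUnitSphereProd (EuclideanSpace ℝ (Fin N))).symm_apply_apply y
    calc ((homeomorphUnitSphereProd (EuclideanSpace ℝ (Fin N)) y).2 : ℝ) •
          ((homeomorphUnitSphereProd (EuclideanSpace ℝ (Fin N)) y).1 : E)
        = (((homeomorphUnitSphereProd (EuclideanSpace ℝ (Fin N))).symm
            (homeomorphUnitSphereProd (EuclideanSpace ℝ (Fin N)) y) : ({(0:E)}ᶜ : Set _)) : E) := by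
          rw [homeomorphUnitSphereProd_symm_apply_coe]
      _ = (y : E) := by rw [this]
  -- step 4: Fubini on the product
  have step4 : ∫⁻ p : sphere (0 : E) 1 × Ioi (0:ℝ), g p
          ∂((volume : Measure (EuclideanSpace ℝ (Fin N))).toSphere.prod
            (.volumeIoiPow (Module.finrank ℝ (EuclideanSpace ℝ (Fin N)) - 1)))
      = ∫⁻ ω : sphere (0 : E) 1, ∫⁻ r : Ioi (0:ℝ), g (ω, r)
          ∂(Measure.volumeIoiPow (Module.finrank ℝ (EuclideanSpace ℝ (Fin N)) - 1))
          ∂((volume : Measure (EuclideanSpace ℝ (Fin N))).toSphere) :=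
    lintegral_prod _ hgmeas.aemeasurable
  -- step 5: inner integral over volumeIoiPow
  have step5 : ∀ ω : sphere (0 : E) 1,
      ∫⁻ r : Ioi (0:ℝ), g (ω, r)
          ∂(Measure.volumeIoiPow (Module.finrank ℝ (EuclideanSpace ℝ (Fin N)) - 1))
      = ∫⁻ r in Ioi (1:ℝ), ENNReal.ofReal (r ^ (N-1)) * f (r • (ω : E)) := by
    intro ω
    have hωn : ‖(ω : E)‖ = 1 := by
      have := ω.2
      rwa [mem_sphere_zero_iff_norm] at this
    rw [Measure.volumeIoiPow, lintegral_withDensity_eq_lintegral_mul _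
      ((measurable_subtype_coe.pow_const _).ennreal_ofReal) (by
        exact hfi.comp (measurable_subtype_coe.smul_const ((ω : E))))]
    have : ∫⁻ (a : ↥(Ioi (0:ℝ))),
        ((fun r : Ioi (0:ℝ) => ENNReal.ofReal ((r:ℝ) ^ (Module.finrank ℝ (EuclideanSpace ℝ (Fin N)) - 1))) *
         (fun r : Ioi (0:ℝ) => ({x : E | 1 < ‖x‖}.indicator f) ((r:ℝ) • (ω : E)))) a
          ∂(Measure.comap Subtype.val volume)
        = ∫⁻ r in Ioi (0:ℝ), ENNReal.ofReal (r ^ (Module.finrank ℝ (EuclideanSpace ℝ (Fin N)) - 1)) *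
            ({x : E | 1 < ‖x‖}.indicator f) (r • (ω : E)) := by
      exact lintegral_subtype_comap measurableSet_Ioi
        (fun r : ℝ => ENNReal.ofReal (r ^ (Module.finrank ℝ (EuclideanSpace ℝ (Fin N)) - 1)) *
          ({x : E | 1 < ‖x‖}.indicator f) (r • (ω : E)))
    rw [this]
    have hind : ∀ r ∈ Ioi (0:ℝ),
        ENNReal.ofReal (r ^ (Module.finrank ℝ (EuclideanSpace ℝ (Fin N)) - 1)) *
            ({x : E | 1 < ‖x‖}.indicator f) (r • (ω : E))
        = (Ioi (1:ℝ)).indicator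
            (fun r => ENNReal.ofReal (r ^ (N-1)) * f (r • (ω : E))) r := by
      intro r hr
      have hnorm : ‖r • (ω : E)‖ = r := by
        rw [norm_smul, hωn, mul_one, Real.norm_eq_abs, abs_of_pos hr]
      by_cases h1 : 1 < r
      · rw [indicator_of_mem (by simpa [hnorm] using h1),
          indicator_of_mem (by exact h1), hfinrank]
      · rw [indicator_of_notMem (by simpa [hnorm] using h1),
          indicator_of_notMem (by exact h1), mul_zero]
    rw [setLIntegral_congr_fun measurableSet_Ioi hind,
      lintegral_indicator measurableSet_Ioi, Measure.restrict_restrict measurableSet_Ioi,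
      inter_eq_self_of_subset_left (Ioi_subset_Ioi zero_le_one)]
  rw [step1, step2, step3, step4]
  exact lintegral_congr step5

lemma ftc_ray (φ : EuclideanSpace ℝ (Fin N) → ℝ) (hφ : ContDiff ℝ 1 φ)
    (v : EuclideanSpace ℝ (Fin N)) (hv : ‖v‖ = 1) {r : ℝ} (hr : 1 ≤ r) :
    |φ (r • v)| ≤ |φ v| + ∫ t in (1:ℝ)..r, ‖fderiv ℝ φ (t • v)‖ := by
  have hder : ∀ t : ℝ, HasDerivAt (fun s : ℝ => φ (s • v)) ((fderiv ℝ φ (t • v)) v) t := by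
    intro t
    have h1 : HasDerivAt (fun s : ℝ => s • v) v t := by
      simpa using (hasDerivAt_id t).smul_const v
    have h2 : HasFDerivAt φ (fderiv ℝ φ (t • v)) (t • v) :=
      (hφ.differentiable one_ne_zero).differentiableAt.hasFDerivAt
    exact h2.comp_hasDerivAt t h1
  have hcontd : Continuous fun t : ℝ => (fderiv ℝ φ (t • v)) v :=
    ((hφ.continuous_fderiv one_ne_zero).comp (continuous_id.smul continuous_const)).clm_apply
      continuous_const
  have hcontn : Continuous fun t : ℝ => ‖fderiv ℝ φ (t • v)‖ :=
    ((hφ.continuous_fderiv one_ne_zero).comp (continuous_id.smul continuous_const)).norm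
  have hftc : ∫ t in (1:ℝ)..r, (fderiv ℝ φ (t • v)) v = φ (r • v) - φ ((1:ℝ) • v) :=
    intervalIntegral.integral_eq_sub_of_hasDerivAt (fun t _ => hder t)
      (hcontd.intervalIntegrable 1 r)
  have h1 : φ (r • v) = φ v + ∫ t in (1:ℝ)..r, (fderiv ℝ φ (t • v)) v := by
    rw [hftc, one_smul]; ring
  rw [h1]
  refine (abs_add_le _ _).trans (add_le_add_right ?_ _)
  calc |∫ t in (1:ℝ)..r, (fderiv ℝ φ (t • v)) v|
      ≤ ∫ t in (1:ℝ)..r, |(fderiv ℝ φ (t • v)) v| :=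
        intervalIntegral.abs_integral_le_integral_abs hr
    _ ≤ ∫ t in (1:ℝ)..r, ‖fderiv ℝ φ (t • v)‖ := by
        apply intervalIntegral.integral_mono_on hr
          (hcontd.abs.intervalIntegrable 1 r) (hcontn.intervalIntegrable 1 r)
        intro t _
        calc |(fderiv ℝ φ (t • v)) v| = ‖(fderiv ℝ φ (t • v)) v‖ := rfl
          _ ≤ ‖fderiv ℝ φ (t • v)‖ * ‖v‖ := ContinuousLinearMap.le_opNorm _ _
          _ = ‖fderiv ℝ φ (t • v)‖ := by rw [hv, mul_one]

lemma ftc_ray' (φ : EuclideanSpace ℝ (Fin N) → ℝ) (hφ : ContDiff ℝ 1 φ)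
    (v : EuclideanSpace ℝ (Fin N)) (hv : ‖v‖ = 1) {r : ℝ} (hr : 1 ≤ r) :
    |φ v| ≤ |φ (r • v)| + ∫ t in (1:ℝ)..r, ‖fderiv ℝ φ (t • v)‖ := by
  have hder : ∀ t : ℝ, HasDerivAt (fun s : ℝ => φ (s • v)) ((fderiv ℝ φ (t • v)) v) t := by
    intro t
    have h1 : HasDerivAt (fun s : ℝ => s • v) v t := by
      simpa using (hasDerivAt_id t).smul_const v
    have h2 : HasFDerivAt φ (fderiv ℝ φ (t • v)) (t • v) :=
      (hφ.differentiable one_ne_zero).differentiableAt.hasFDerivAt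
    exact h2.comp_hasDerivAt t h1
  have hcontd : Continuous fun t : ℝ => (fderiv ℝ φ (t • v)) v :=
    ((hφ.continuous_fderiv one_ne_zero).comp (continuous_id.smul continuous_const)).clm_apply
      continuous_const
  have hcontn : Continuous fun t : ℝ => ‖fderiv ℝ φ (t • v)‖ :=
    ((hφ.continuous_fderiv one_ne_zero).comp (continuous_id.smul continuous_const)).norm
  have hftc : ∫ t in (1:ℝ)..r, (fderiv ℝ φ (t • v)) v = φ (r • v) - φ ((1:ℝ) • v) :=
    intervalIntegral.integral_eq_sub_of_hasDerivAt (fun t _ => hder t)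
      (hcontd.intervalIntegrable 1 r)
  have h1 : φ v = φ (r • v) - ∫ t in (1:ℝ)..r, (fderiv ℝ φ (t • v)) v := by
    rw [hftc, one_smul]; ring
  rw [h1]
  refine (abs_sub _ _).trans (add_le_add_right ?_ _)
  calc |∫ t in (1:ℝ)..r, (fderiv ℝ φ (t • v)) v|
      ≤ ∫ t in (1:ℝ)..r, |(fderiv ℝ φ (t • v)) v| :=
        intervalIntegral.abs_integral_le_integral_abs hr
    _ ≤ ∫ t in (1:ℝ)..r, ‖fderiv ℝ φ (t • v)‖ := by
        apply intervalIntegral.integral_mono_on hr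
          (hcontd.abs.intervalIntegrable 1 r) (hcontn.intervalIntegrable 1 r)
        intro t _
        calc |(fderiv ℝ φ (t • v)) v| = ‖(fderiv ℝ φ (t • v)) v‖ := rfl
          _ ≤ ‖fderiv ℝ φ (t • v)‖ * ‖v‖ := ContinuousLinearMap.le_opNorm _ _
          _ = ‖fderiv ℝ φ (t • v)‖ := by rw [hv, mul_one]

lemma grad_bound (hN : 2 ≤ N) (φ : EuclideanSpace ℝ (Fin N) → ℝ) (hφ : ContDiff ℝ 1 φ)
    (v : EuclideanSpace ℝ (Fin N)) {s : ℝ} (hs : 1 < s) :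
    ENNReal.ofReal (∫ t in (1:ℝ)..s, ‖fderiv ℝ φ (t • v)‖) ^ N ≤
      ENNReal.ofReal (Real.log s) ^ (N - 1) *
        ∫⁻ t in Ioi (1:ℝ), ENNReal.ofReal t ^ (N - 1) *
          ENNReal.ofReal ‖fderiv ℝ φ (t • v)‖ ^ N := by
  have hcontn : Continuous fun t : ℝ => ‖fderiv ℝ φ (t • v)‖ :=
    ((hφ.continuous_fderiv one_ne_zero).comp (continuous_id.smul continuous_const)).norm
  have h1 : ENNReal.ofReal (∫ t in (1:ℝ)..s, ‖fderiv ℝ φ (t • v)‖)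
      = ∫⁻ t in Ioo 1 s, ENNReal.ofReal ‖fderiv ℝ φ (t • v)‖ := by
    rw [intervalIntegral.integral_of_le hs.le,
      ofReal_integral_eq_lintegral_ofReal ((hcontn.intervalIntegrable 1 s).1)
        (Filter.Eventually.of_forall fun t => norm_nonneg _)]
    exact (setLIntegral_congr Ioo_ae_eq_Ioc).symm
  rw [h1]
  refine (holder_ray N hN hs _ hcontn.measurable.ennreal_ofReal).trans ?_
  refine mul_le_mul_right ?_ _
  exact lintegral_mono' (Measure.restrict_mono Ioo_subset_Ioi_self le_rfl) le_rfl

lemma trace_bound (hN : 2 ≤ N) (φ : EuclideanSpace ℝ (Fin N) → ℝ) (hφ : ContDiff ℝ 1 φ)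
    (v : EuclideanSpace ℝ (Fin N)) (hv : ‖v‖ = 1) :
    ENNReal.ofReal |φ v| ^ N ≤ 2 ^ (N - 1) *
      ((∫⁻ s in Ioi (1:ℝ), ENNReal.ofReal s ^ (N - 1) * ENNReal.ofReal |φ (s • v)| ^ N) +
       ∫⁻ t in Ioi (1:ℝ), ENNReal.ofReal t ^ (N - 1) *
          ENNReal.ofReal ‖fderiv ℝ φ (t • v)‖ ^ N) := by
  have hcontn : Continuous fun t : ℝ => ‖fderiv ℝ φ (t • v)‖ :=
    ((hφ.continuous_fderiv one_ne_zero).comp (continuous_id.smul continuous_const)).norm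
  have hcontφ : Continuous fun s : ℝ => |φ (s • v)| :=
    (hφ.continuous.comp (continuous_id.smul continuous_const)).abs
  set A := ∫⁻ s in Ioi (1:ℝ), ENNReal.ofReal s ^ (N - 1) * ENNReal.ofReal |φ (s • v)| ^ N with hA
  set B := ∫⁻ t in Ioi (1:ℝ), ENNReal.ofReal t ^ (N - 1) *
      ENNReal.ofReal ‖fderiv ℝ φ (t • v)‖ ^ N with hB
  set J := ∫ t in (1:ℝ)..2, ‖fderiv ℝ φ (t • v)‖ with hJ
  have hJ0 : 0 ≤ J := intervalIntegral.integral_nonneg (by norm_num) fun t _ => norm_nonneg _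
  have hptwise : ∀ s ∈ Ioo (1:ℝ) 2, ENNReal.ofReal |φ v| ^ N ≤
      2 ^ (N - 1) * (ENNReal.ofReal s ^ (N - 1) * ENNReal.ofReal |φ (s • v)| ^ N
        + ENNReal.ofReal J ^ N) := by
    intro s hs
    have habs : |φ v| ≤ |φ (s • v)| + J := by
      refine (ftc_ray' φ hφ v hv hs.1.le).trans (add_le_add_right ?_ _)
      refine intervalIntegral.integral_mono_interval le_rfl hs.1.le hs.2.le
        (Filter.Eventually.of_forall fun t => norm_nonneg _) (hcontn.intervalIntegrable 1 2)
    have hpow : |φ v| ^ N ≤ 2 ^ (N - 1) * (|φ (s • v)| ^ N + J ^ N) := by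
      calc |φ v| ^ N ≤ (|φ (s • v)| + J) ^ N :=
            pow_le_pow_left₀ (abs_nonneg _) habs N
        _ ≤ 2 ^ (N - 1) * (|φ (s • v)| ^ N + J ^ N) := add_pow_le (abs_nonneg _) hJ0 N
    calc ENNReal.ofReal |φ v| ^ N = ENNReal.ofReal (|φ v| ^ N) := by
          rw [ENNReal.ofReal_pow (abs_nonneg _)]
      _ ≤ ENNReal.ofReal (2 ^ (N - 1) * (|φ (s • v)| ^ N + J ^ N)) := ENNReal.ofReal_le_ofReal hpow
      _ = 2 ^ (N - 1) * (ENNReal.ofReal |φ (s • v)| ^ N + ENNReal.ofReal J ^ N) := by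
          rw [ENNReal.ofReal_mul (by positivity), ENNReal.ofReal_add (by positivity) (by positivity),
            ENNReal.ofReal_pow (abs_nonneg _), ENNReal.ofReal_pow hJ0,
            ENNReal.ofReal_pow (by norm_num : (0:ℝ) ≤ 2), ENNReal.ofReal_ofNat]
      _ ≤ 2 ^ (N - 1) * (ENNReal.ofReal s ^ (N - 1) * ENNReal.ofReal |φ (s • v)| ^ N
            + ENNReal.ofReal J ^ N) := by
          gcongr
          refine le_mul_of_one_le_left zero_le ?_
          calc (1:ℝ≥0∞) = 1 ^ (N - 1) := (one_pow _).symm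
            _ ≤ ENNReal.ofReal s ^ (N - 1) :=
              pow_le_pow_left' (by simpa using ENNReal.one_le_ofReal.2 hs.1.le) _
  have hgb : ENNReal.ofReal J ^ N ≤ B := by
    refine (grad_bound hN φ hφ v one_lt_two).trans ?_
    refine mul_le_of_le_one_left zero_le ?_
    calc ENNReal.ofReal (Real.log 2) ^ (N - 1) ≤ 1 ^ (N - 1) := by
          refine pow_le_pow_left' (ENNReal.ofReal_le_one.2 ?_) _
          have := Real.log_le_sub_one_of_pos (by norm_num : (0:ℝ) < 2)
          linarith
      _ = 1 := one_pow _
  calc ENNReal.ofReal |φ v| ^ N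
      = (ENNReal.ofReal |φ v| ^ N) * volume (Ioo (1:ℝ) 2) := by
        rw [Real.volume_Ioo]; norm_num
    _ = ∫⁻ s in Ioo (1:ℝ) 2, ENNReal.ofReal |φ v| ^ N := (setLIntegral_const _ _).symm
    _ ≤ ∫⁻ s in Ioo (1:ℝ) 2, 2 ^ (N - 1) * (ENNReal.ofReal s ^ (N - 1) *
          ENNReal.ofReal |φ (s • v)| ^ N + ENNReal.ofReal J ^ N) := by
        have hm : Measurable fun s : ℝ => ENNReal.ofReal s ^ (N - 1) *
            ENNReal.ofReal |φ (s • v)| ^ N :=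
          (ENNReal.measurable_ofReal.pow_const _).mul
            ((ENNReal.measurable_ofReal.comp hcontφ.measurable).pow_const _)
        exact setLIntegral_mono (measurable_const.mul (hm.add measurable_const)) hptwise
    _ = 2 ^ (N - 1) * ((∫⁻ s in Ioo (1:ℝ) 2, ENNReal.ofReal s ^ (N - 1) *
          ENNReal.ofReal |φ (s • v)| ^ N) + ENNReal.ofReal J ^ N * volume (Ioo (1:ℝ) 2)) := by
        have hm : Measurable fun s : ℝ => ENNReal.ofReal s ^ (N - 1) *
            ENNReal.ofReal |φ (s • v)| ^ N :=
          (ENNReal.measurable_ofReal.pow_const _).mul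
            ((ENNReal.measurable_ofReal.comp hcontφ.measurable).pow_const _)
        rw [lintegral_const_mul _ (f := fun s => ENNReal.ofReal s ^ (N - 1) *
            ENNReal.ofReal |φ (s • v)| ^ N + ENNReal.ofReal J ^ N) (hm.add measurable_const),
          lintegral_add_right _ measurable_const, setLIntegral_const]
    _ ≤ 2 ^ (N - 1) * (A + B) := by
        gcongr
        · exact lintegral_mono' (Measure.restrict_mono Ioo_subset_Ioi_self le_rfl) le_rfl
        · refine le_trans ?_ hgb
          rw [Real.volume_Ioo]
          norm_num

lemma pointwise_bound (hN : 2 ≤ N) (φ : EuclideanSpace ℝ (Fin N) → ℝ) (hφ : ContDiff ℝ 1 φ)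
    (v : EuclideanSpace ℝ (Fin N)) (hv : ‖v‖ = 1) {r : ℝ} (hr : 1 < r) :
    ENNReal.ofReal |φ (r • v)| ^ N ≤
      (2 ^ (N - 1) * 2 ^ (N - 1) + 2 ^ (N - 1)) * ENNReal.ofReal (1 + Real.log r) ^ (N - 1) *
      ((∫⁻ s in Ioi (1:ℝ), ENNReal.ofReal s ^ (N - 1) * ENNReal.ofReal |φ (s • v)| ^ N) +
       ∫⁻ t in Ioi (1:ℝ), ENNReal.ofReal t ^ (N - 1) *
          ENNReal.ofReal ‖fderiv ℝ φ (t • v)‖ ^ N) := by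
  set A := ∫⁻ s in Ioi (1:ℝ), ENNReal.ofReal s ^ (N - 1) * ENNReal.ofReal |φ (s • v)| ^ N with hA
  set B := ∫⁻ t in Ioi (1:ℝ), ENNReal.ofReal t ^ (N - 1) *
      ENNReal.ofReal ‖fderiv ℝ φ (t • v)‖ ^ N with hB
  set I := ∫ t in (1:ℝ)..r, ‖fderiv ℝ φ (t • v)‖ with hI
  have hI0 : 0 ≤ I := intervalIntegral.integral_nonneg hr.le fun t _ => norm_nonneg _
  have hlog : (0:ℝ) < Real.log r := Real.log_pos hr
  have hone : (1:ℝ≥0∞) ≤ ENNReal.ofReal (1 + Real.log r) ^ (N - 1) := by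
    calc (1:ℝ≥0∞) = 1 ^ (N - 1) := (one_pow _).symm
      _ ≤ ENNReal.ofReal (1 + Real.log r) ^ (N - 1) :=
        pow_le_pow_left' (ENNReal.one_le_ofReal.2 (by linarith)) _
  have hlogle : ENNReal.ofReal (Real.log r) ^ (N - 1) ≤
      ENNReal.ofReal (1 + Real.log r) ^ (N - 1) :=
    pow_le_pow_left' (ENNReal.ofReal_le_ofReal (by linarith)) _
  have step1 : ENNReal.ofReal |φ (r • v)| ^ N ≤
      2 ^ (N - 1) * (ENNReal.ofReal |φ v| ^ N + ENNReal.ofReal I ^ N) := by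
    calc ENNReal.ofReal |φ (r • v)| ^ N = ENNReal.ofReal (|φ (r • v)| ^ N) := by
          rw [ENNReal.ofReal_pow (abs_nonneg _)]
      _ ≤ ENNReal.ofReal (2 ^ (N - 1) * (|φ v| ^ N + I ^ N)) := by
          refine ENNReal.ofReal_le_ofReal ?_
          calc |φ (r • v)| ^ N ≤ (|φ v| + I) ^ N :=
                pow_le_pow_left₀ (abs_nonneg _) (ftc_ray φ hφ v hv hr.le) N
            _ ≤ 2 ^ (N - 1) * (|φ v| ^ N + I ^ N) := add_pow_le (abs_nonneg _) hI0 N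
      _ = 2 ^ (N - 1) * (ENNReal.ofReal |φ v| ^ N + ENNReal.ofReal I ^ N) := by
          rw [ENNReal.ofReal_mul (by positivity), ENNReal.ofReal_add (by positivity) (by positivity),
            ENNReal.ofReal_pow (abs_nonneg _), ENNReal.ofReal_pow hI0,
            ENNReal.ofReal_pow (by norm_num : (0:ℝ) ≤ 2), ENNReal.ofReal_ofNat]
  have step2 : ENNReal.ofReal |φ v| ^ N ≤
      2 ^ (N - 1) * ENNReal.ofReal (1 + Real.log r) ^ (N - 1) * (A + B) := by
    refine (trace_bound hN φ hφ v hv).trans ?_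
    rw [mul_assoc]
    exact mul_le_mul_right (le_mul_of_one_le_left zero_le hone) _
  have step3 : ENNReal.ofReal I ^ N ≤ ENNReal.ofReal (1 + Real.log r) ^ (N - 1) * (A + B) := by
    refine (grad_bound hN φ hφ v hr).trans ?_
    exact mul_le_mul hlogle (le_add_self) zero_le zero_le
  calc ENNReal.ofReal |φ (r • v)| ^ N
      ≤ 2 ^ (N - 1) * (ENNReal.ofReal |φ v| ^ N + ENNReal.ofReal I ^ N) := step1
    _ ≤ 2 ^ (N - 1) * (2 ^ (N - 1) * ENNReal.ofReal (1 + Real.log r) ^ (N - 1) * (A + B)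
          + ENNReal.ofReal (1 + Real.log r) ^ (N - 1) * (A + B)) := by
        gcongr
    _ = (2 ^ (N - 1) * 2 ^ (N - 1) + 2 ^ (N - 1)) *
          ENNReal.ofReal (1 + Real.log r) ^ (N - 1) * (A + B) := by ring

theorem weighted_embedding_exterior_critical (N : ℕ) (hN : 2 ≤ N) :
    ∃ C : ℝ, 0 < C ∧
      ∀ (g : ℝ → ℝ), Measurable g → (∀ r, 1 < r → 0 ≤ g r) →
        IntegrableOn (fun r => g r * (r * (1 + Real.log r)) ^ (N - 1)) (Ioi 1) →
      ∀ (φ : EuclideanSpace ℝ (Fin N) → ℝ), ContDiff ℝ 1 φ →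
        ∫⁻ x in {x : EuclideanSpace ℝ (Fin N) | 1 < ‖x‖},
            ENNReal.ofReal (g ‖x‖ * |φ x| ^ N) ≤
          ENNReal.ofReal (C * ∫ r in Ioi (1 : ℝ), g r * (r * (1 + Real.log r)) ^ (N - 1)) *
            ((∫⁻ x in {x : EuclideanSpace ℝ (Fin N) | 1 < ‖x‖}, ENNReal.ofReal (|φ x| ^ N)) +
              ∫⁻ x in {x : EuclideanSpace ℝ (Fin N) | 1 < ‖x‖},
                ENNReal.ofReal (‖fderiv ℝ φ x‖ ^ N)) := by
  classical
  refine ⟨(2:ℝ) ^ (N - 1) * 2 ^ (N - 1) + 2 ^ (N - 1), by positivity, ?_⟩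
  intro g hg hg0 hgint φ hφ
  set K : ℝ≥0∞ := 2 ^ (N - 1) * 2 ^ (N - 1) + 2 ^ (N - 1) with hKdef
  have hφc : Continuous φ := hφ.continuous
  have hdc : Continuous fun x : EuclideanSpace ℝ (Fin N) => ‖fderiv ℝ φ x‖ :=
    (hφ.continuous_fderiv one_ne_zero).norm
  -- measurable integrands
  have hf1 : Measurable fun x : EuclideanSpace ℝ (Fin N) =>
      ENNReal.ofReal (g ‖x‖ * |φ x| ^ N) :=
    ((hg.comp measurable_norm).mul ((hφc.abs.pow N).measurable)).ennreal_ofReal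
  have hf2 : Measurable fun x : EuclideanSpace ℝ (Fin N) => ENNReal.ofReal (|φ x| ^ N) :=
    (hφc.abs.pow N).measurable.ennreal_ofReal
  have hf3 : Measurable fun x : EuclideanSpace ℝ (Fin N) => ENNReal.ofReal (‖fderiv ℝ φ x‖ ^ N) :=
    (hdc.pow N).measurable.ennreal_ofReal
  -- notation
  set A : sphere (0 : EuclideanSpace ℝ (Fin N)) 1 → ℝ≥0∞ := fun ω =>
    ∫⁻ s in Ioi (1:ℝ), ENNReal.ofReal s ^ (N - 1) *
      ENNReal.ofReal |φ (s • (ω : EuclideanSpace ℝ (Fin N)))| ^ N with hAdef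
  set B : sphere (0 : EuclideanSpace ℝ (Fin N)) 1 → ℝ≥0∞ := fun ω =>
    ∫⁻ t in Ioi (1:ℝ), ENNReal.ofReal t ^ (N - 1) *
      ENNReal.ofReal ‖fderiv ℝ φ (t • (ω : EuclideanSpace ℝ (Fin N)))‖ ^ N with hBdef
  have hnormsmul : ∀ (ω : sphere (0 : EuclideanSpace ℝ (Fin N)) 1) {r : ℝ}, 0 < r →
      ‖r • (ω : EuclideanSpace ℝ (Fin N))‖ = r := by
    intro ω r hr
    have hω : ‖(ω : EuclideanSpace ℝ (Fin N))‖ = 1 := by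
      have := ω.2; rwa [mem_sphere_zero_iff_norm] at this
    rw [norm_smul, hω, mul_one, Real.norm_eq_abs, abs_of_pos hr]
  -- the weight integral
  set Ig : ℝ≥0∞ := ∫⁻ r in Ioi (1:ℝ),
    ENNReal.ofReal (g r * (r * (1 + Real.log r)) ^ (N - 1)) with hIgdef
  have hIg : Ig = ENNReal.ofReal (∫ r in Ioi (1:ℝ), g r * (r * (1 + Real.log r)) ^ (N - 1)) := by
    rw [hIgdef, ← ofReal_integral_eq_lintegral_ofReal hgint]
    filter_upwards [ae_restrict_mem measurableSet_Ioi] with r hr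
    have h1 : (0:ℝ) < Real.log r + 1 := by
      have := Real.log_pos hr; linarith
    have h2 : (0:ℝ) < r := lt_trans zero_lt_one hr
    exact mul_nonneg (hg0 r hr) (pow_nonneg (mul_nonneg h2.le (by linarith)) _)
  have hIgne : Ig ≠ ⊤ := by rw [hIg]; exact ENNReal.ofReal_ne_top
  have hKne : K ≠ ⊤ := by
    rw [hKdef]
    refine ENNReal.add_ne_top.2 ⟨ENNReal.mul_ne_top ?_ ?_, ?_⟩ <;>
      exact ENNReal.pow_ne_top ENNReal.ofNat_ne_top
  -- continuity on the product
  have hcsm : Continuous fun p : sphere (0 : EuclideanSpace ℝ (Fin N)) 1 × ℝ =>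
      p.2 • (p.1 : EuclideanSpace ℝ (Fin N)) :=
    continuous_snd.smul (continuous_subtype_val.comp continuous_fst)
  have hAm : Measurable A := by
    apply Measurable.lintegral_prod_right'
      (f := fun p : sphere (0 : EuclideanSpace ℝ (Fin N)) 1 × ℝ =>
        ENNReal.ofReal p.2 ^ (N - 1) *
          ENNReal.ofReal |φ (p.2 • (p.1 : EuclideanSpace ℝ (Fin N)))| ^ N)
    exact ((ENNReal.measurable_ofReal.comp measurable_snd).pow_const _).mul
      ((ENNReal.measurable_ofReal.comp (hφc.comp hcsm).abs.measurable).pow_const _)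
  have hBm : Measurable B := by
    apply Measurable.lintegral_prod_right'
      (f := fun p : sphere (0 : EuclideanSpace ℝ (Fin N)) 1 × ℝ =>
        ENNReal.ofReal p.2 ^ (N - 1) *
          ENNReal.ofReal ‖fderiv ℝ φ (p.2 • (p.1 : EuclideanSpace ℝ (Fin N)))‖ ^ N)
    exact ((ENNReal.measurable_ofReal.comp measurable_snd).pow_const _).mul
      ((ENNReal.measurable_ofReal.comp (hdc.comp hcsm).measurable).pow_const _)
  -- polar coordinates for the three integrals
  have hL1 : ∫⁻ x in {x : EuclideanSpace ℝ (Fin N) | 1 < ‖x‖}, ENNReal.ofReal (|φ x| ^ N)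
      = ∫⁻ ω : sphere (0 : EuclideanSpace ℝ (Fin N)) 1, A ω
          ∂((volume : Measure (EuclideanSpace ℝ (Fin N))).toSphere) := by
    rw [polar_lintegral _ hf2]
    refine lintegral_congr fun ω => ?_
    refine setLIntegral_congr_fun measurableSet_Ioi (fun r hr => ?_)
    rw [ENNReal.ofReal_pow (lt_trans zero_lt_one hr).le, ENNReal.ofReal_pow (abs_nonneg _)]
  have hL2 : ∫⁻ x in {x : EuclideanSpace ℝ (Fin N) | 1 < ‖x‖}, ENNReal.ofReal (‖fderiv ℝ φ x‖ ^ N)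
      = ∫⁻ ω : sphere (0 : EuclideanSpace ℝ (Fin N)) 1, B ω
          ∂((volume : Measure (EuclideanSpace ℝ (Fin N))).toSphere) := by
    rw [polar_lintegral _ hf3]
    refine lintegral_congr fun ω => ?_
    refine setLIntegral_congr_fun measurableSet_Ioi (fun r hr => ?_)
    rw [ENNReal.ofReal_pow (lt_trans zero_lt_one hr).le, ENNReal.ofReal_pow (norm_nonneg _)]
  -- inner estimate for each direction ω
  have hgm2 : Measurable fun r : ℝ =>
      ENNReal.ofReal (g r * (r * (1 + Real.log r)) ^ (N - 1)) :=
    (hg.mul ((measurable_id.mul (measurable_const.add Real.measurable_log)).pow_const _)).ennreal_ofReal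
  have key : ∀ ω : sphere (0 : EuclideanSpace ℝ (Fin N)) 1,
      (∫⁻ r in Ioi (1:ℝ), ENNReal.ofReal (r ^ (N-1)) *
        ENNReal.ofReal (g ‖r • (ω : EuclideanSpace ℝ (Fin N))‖ *
          |φ (r • (ω : EuclideanSpace ℝ (Fin N)))| ^ N))
      ≤ (K * (A ω + B ω)) * Ig := by
    intro ω
    have hωn : ‖(ω : EuclideanSpace ℝ (Fin N))‖ = 1 := by
      have := ω.2; rwa [mem_sphere_zero_iff_norm] at this
    calc ∫⁻ r in Ioi (1:ℝ), ENNReal.ofReal (r ^ (N-1)) *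
          ENNReal.ofReal (g ‖r • (ω : EuclideanSpace ℝ (Fin N))‖ *
            |φ (r • (ω : EuclideanSpace ℝ (Fin N)))| ^ N)
        = ∫⁻ r in Ioi (1:ℝ), ENNReal.ofReal (g r) * (ENNReal.ofReal r ^ (N-1) *
            ENNReal.ofReal |φ (r • (ω : EuclideanSpace ℝ (Fin N)))| ^ N) := by
          refine setLIntegral_congr_fun measurableSet_Ioi
            (fun r hr => ?_)
          have hr0 : (0:ℝ) < r := lt_trans zero_lt_one hr
          rw [hnormsmul ω hr0, ENNReal.ofReal_mul (hg0 r hr),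
            ENNReal.ofReal_pow (abs_nonneg _), ENNReal.ofReal_pow hr0.le]
          ring
      _ ≤ ∫⁻ r in Ioi (1:ℝ), ENNReal.ofReal (g r) * (ENNReal.ofReal r ^ (N-1) *
            (K * ENNReal.ofReal (1 + Real.log r) ^ (N - 1) * (A ω + B ω))) := by
          refine setLIntegral_mono ?_ fun r hr => ?_
          · exact (hg.ennreal_ofReal).mul ((ENNReal.measurable_ofReal.pow_const _).mul
              (((measurable_const.mul ((ENNReal.measurable_ofReal.comp
                (measurable_const.add Real.measurable_log)).pow_const _))).mul measurable_const))
          · exact mul_le_mul_right (mul_le_mul_right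
              (pointwise_bound hN φ hφ _ hωn hr) _) _
      _ = ∫⁻ r in Ioi (1:ℝ), (K * (A ω + B ω)) *
            ENNReal.ofReal (g r * (r * (1 + Real.log r)) ^ (N - 1)) := by
          refine setLIntegral_congr_fun measurableSet_Ioi
            (fun r hr => ?_)
          have hr0 : (0:ℝ) < r := lt_trans zero_lt_one hr
          have hlog : (0:ℝ) < Real.log r := Real.log_pos hr
          rw [ENNReal.ofReal_mul (hg0 r hr), ENNReal.ofReal_pow (by positivity),
            ENNReal.ofReal_mul hr0.le, mul_pow]
          ring
      _ = (K * (A ω + B ω)) * Ig := lintegral_const_mul _ hgm2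
  -- put everything together
  have hKC : ENNReal.ofReal ((2:ℝ) ^ (N - 1) * 2 ^ (N - 1) + 2 ^ (N - 1)) = K := by
    rw [ENNReal.ofReal_add (by positivity) (by positivity),
      ENNReal.ofReal_mul (by positivity), ENNReal.ofReal_pow (by norm_num : (0:ℝ) ≤ 2),
      ENNReal.ofReal_ofNat, hKdef]
  rw [ENNReal.ofReal_mul (by positivity), ← hIg, hKC, hL1, hL2]
  calc ∫⁻ x in {x : EuclideanSpace ℝ (Fin N) | 1 < ‖x‖}, ENNReal.ofReal (g ‖x‖ * |φ x| ^ N)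
      = ∫⁻ ω : sphere (0 : EuclideanSpace ℝ (Fin N)) 1, ∫⁻ r in Ioi (1:ℝ),
          ENNReal.ofReal (r ^ (N-1)) *
            ENNReal.ofReal (g ‖r • (ω : EuclideanSpace ℝ (Fin N))‖ *
              |φ (r • (ω : EuclideanSpace ℝ (Fin N)))| ^ N)
          ∂(volume : Measure ℝ) ∂((volume : Measure (EuclideanSpace ℝ (Fin N))).toSphere) :=
        polar_lintegral _ hf1
    _ ≤ ∫⁻ ω : sphere (0 : EuclideanSpace ℝ (Fin N)) 1, (K * (A ω + B ω)) * Ig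
          ∂((volume : Measure (EuclideanSpace ℝ (Fin N))).toSphere) := lintegral_mono key
    _ = ∫⁻ ω : sphere (0 : EuclideanSpace ℝ (Fin N)) 1, (K * Ig) * (A ω + B ω)
          ∂((volume : Measure (EuclideanSpace ℝ (Fin N))).toSphere) := by
        refine lintegral_congr fun ω => ?_; ring
    _ = (K * Ig) * ∫⁻ ω : sphere (0 : EuclideanSpace ℝ (Fin N)) 1, (A ω + B ω)
          ∂((volume : Measure (EuclideanSpace ℝ (Fin N))).toSphere) :=
        lintegral_const_mul' _ _ (ENNReal.mul_ne_top hKne hIgne)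
    _ = (K * Ig) * ((∫⁻ ω, A ω ∂((volume : Measure (EuclideanSpace ℝ (Fin N))).toSphere)) +
          ∫⁻ ω, B ω ∂((volume : Measure (EuclideanSpace ℝ (Fin N))).toSphere)) := by
        rw [lintegral_add_left hAm]
    _ = K * Ig * ((∫⁻ ω, A ω ∂((volume : Measure (EuclideanSpace ℝ (Fin N))).toSphere)) +
          ∫⁻ ω, B ω ∂((volume : Measure (EuclideanSpace ℝ (Fin N))).toSphere)) := rfl


end WeightedEmbeddingAux
end
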